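/- arXiv:2101.06490 — 10 statements merged into one kernel-verified Lean document; each statement's English description precedes it below -/
import Mathlib

section
/- For any binary string S, if VCdim(S) ≥ d+1 then SWdim(S) ≥ d; consequently VCdim(S) − 1 ≤ SWdim(S) ≤ VCdim(S). -/
/-- The family of subsets of `ℕ` arising from finite contiguous substrings of `S`:
a substring starting at `t` of length `w` yields `{i | i < w ∧ S (t+i) = true}`. -/
def subFam (S : ℕ → Bool) : Set (Set ℕ) :=
  {A | ∃ t w : ℕ, A = {i | i < w ∧ S (t + i) = true}}

/-- The subfamily arising from substrings of a fixed length `w`. -/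
def subFamW (S : ℕ → Bool) (w : ℕ) : Set (Set ℕ) :=
  {A | ∃ t : ℕ, A = {i | i < w ∧ S (t + i) = true}}

/-- A family of subsets of `ℕ` shatters a finite set `A`. -/
def FamShatters (F : Set (Set ℕ)) (A : Finset ℕ) : Prop :=
  ∀ B ⊆ A, ∃ C ∈ F, ∀ i ∈ A, (i ∈ C ↔ i ∈ B)

/-- The VC dimension of a family of subsets of `ℕ`, as an extended natural. -/
noncomputable def vcDimF (F : Set (Set ℕ)) : ℕ∞ :=
  sSup {n : ℕ∞ | ∃ A : Finset ℕ, FamShatters F A ∧ (A.card : ℕ∞) = n}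

/-- The VC dimension of a binary string. -/
noncomputable def VCdim (S : ℕ → Bool) : ℕ∞ := vcDimF (subFam S)

/-- The sliding-window VC dimension of a binary string. -/
noncomputable def SWdim (S : ℕ → Bool) : ℕ∞ := ⨆ w : ℕ, vcDimF (subFamW S w)

lemma famShatters_mono {F G : Set (Set ℕ)} (h : F ⊆ G) {A : Finset ℕ}
    (hA : FamShatters F A) : FamShatters G A := by
  intro B hB
  obtain ⟨C, hC, hCB⟩ := hA B hB
  exact ⟨C, h hC, hCB⟩

lemma le_vcDimF {F : Set (Set ℕ)} {A : Finset ℕ} (h : FamShatters F A) :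
    (A.card : ℕ∞) ≤ vcDimF F :=
  le_sSup ⟨A, h, rfl⟩

lemma vcDimF_mono {F G : Set (Set ℕ)} (h : F ⊆ G) : vcDimF F ≤ vcDimF G := by
  apply sSup_le_sSup
  rintro n ⟨A, hA, rfl⟩
  exact ⟨A, famShatters_mono h hA, rfl⟩

lemma key (S : ℕ → Bool) (d : ℕ) (hd : (d : ℕ∞) + 1 ≤ VCdim S) :
    (d : ℕ∞) ≤ SWdim S := by
  have hlt : (d : ℕ∞) < VCdim S :=
    lt_of_lt_of_le ((ENat.lt_add_one_iff (ENat.coe_ne_top d)).mpr le_rfl) hd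
  rw [VCdim, vcDimF, lt_sSup_iff] at hlt
  obtain ⟨x, ⟨A, hA, rfl⟩, hx⟩ := hlt
  have hcard : d < A.card := by exact_mod_cast hx
  have hne : A.Nonempty := Finset.card_pos.mp (by omega)
  set m := A.max' hne with hm
  have hmA : m ∈ A := A.max'_mem hne
  set A' := A.erase m with hA'
  have hshat : FamShatters (subFamW S m) A' := by
    intro B hB
    have hBA : B ∪ {m} ⊆ A := by
      intro i hi
      rcases Finset.mem_union.mp hi with h1 | h1
      · exact Finset.erase_subset _ _ (hB h1)
      · simpa [Finset.mem_singleton.mp h1] using hmA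
    obtain ⟨C, hC, hCB⟩ := hA (B ∪ {m}) hBA
    obtain ⟨t, w, rfl⟩ := hC
    refine ⟨{i | i < m ∧ S (t + i) = true}, ⟨t, rfl⟩, ?_⟩
    intro i hi
    have him : i ∈ A ∧ i ≠ m := by
      constructor
      · exact Finset.erase_subset _ _ hi
      · exact Finset.ne_of_mem_erase hi
    have hile : i < m := lt_of_le_of_ne (A.le_max' i him.1) him.2
    have hmC : m < w ∧ S (t + m) = true := by
      have := (hCB m hmA).mpr (by simp)
      exact this
    have hiw : i < w := lt_trans hile hmC.1
    have := hCB i him.1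
    simp only [Set.mem_setOf_eq] at this ⊢
    constructor
    · intro ⟨_, hs⟩
      have : i ∈ B ∪ {m} := this.mp ⟨hiw, hs⟩
      rcases Finset.mem_union.mp this with h1 | h1
      · exact h1
      · exact absurd (Finset.mem_singleton.mp h1) him.2
    · intro hiB
      have : i ∈ {i | i < w ∧ S (t + i) = true} :=
        this.mpr (Finset.mem_union_left _ hiB)
      exact ⟨hile, this.2⟩
  have hcard' : d ≤ A'.card := by
    rw [hA', Finset.card_erase_of_mem hmA]; omega
  calc (d : ℕ∞) ≤ (A'.card : ℕ∞) := by exact_mod_cast hcard'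
    _ ≤ vcDimF (subFamW S m) := le_vcDimF hshat
    _ ≤ SWdim S := le_iSup (fun w => vcDimF (subFamW S w)) m

/-- If `VCdim S ≥ d+1` then `SWdim S ≥ d`; consequently
`VCdim S - 1 ≤ SWdim S ≤ VCdim S`. -/
theorem vcdim_swdim_bounds (S : ℕ → Bool) :
    (∀ d : ℕ, (d : ℕ∞) + 1 ≤ VCdim S → (d : ℕ∞) ≤ SWdim S) ∧
      VCdim S - 1 ≤ SWdim S ∧ SWdim S ≤ VCdim S := by
  refine ⟨fun d => key S d, ?_, ?_⟩
  · cases hV : VCdim S with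
    | top =>
      have hall : ∀ d : ℕ, (d : ℕ∞) ≤ SWdim S := fun d =>
        key S d (by rw [hV]; exact le_top)
      cases hS : SWdim S with
      | top => exact le_top
      | coe n =>
        exfalso
        have := hall (n + 1)
        rw [hS] at this
        exact_mod_cast Nat.not_succ_le_self n (by exact_mod_cast this)
    | coe n =>
      cases n with
      | zero => simp
      | succ k =>
        have : (k : ℕ∞) ≤ SWdim S := key S k (le_of_eq (by rw [hV]; push_cast; ring))
        have h : ((k + 1 : ℕ) : ℕ∞) - 1 = (k : ℕ∞) := by
          norm_cast
        rw [h]; exact this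
  · apply iSup_le
    intro w
    apply vcDimF_mono
    rintro C ⟨t, rfl⟩
    exact ⟨t, w, rfl⟩
end

section
/- For every binary string S, the mask dimension of S equals the sliding-window dimension of S. -/
/-- `S` admits a full `d`-mask: there are indices `i_0 < ⋯ < i_{d-1}` such that every
binary pattern of length `d` is realized by some shift `t`. -/
def HasFullMask (S : ℕ → Bool) (d : ℕ) : Prop :=
  ∃ i : Fin d → ℕ, StrictMono i ∧ ∀ b : Fin d → Bool, ∃ t : ℕ, ∀ j : Fin d, S (i j + t) = b j

/-- The mask dimension of a binary string, as an extended natural. -/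
noncomputable def Mdim (S : ℕ → Bool) : ℕ∞ :=
  sSup {n : ℕ∞ | ∃ d : ℕ, HasFullMask S d ∧ (d : ℕ∞) = n}

lemma mask_to_shatter (S : ℕ → Bool) (d : ℕ) (h : HasFullMask S d) :
    ∃ w : ℕ, ∃ A : Finset ℕ, FamShatters (subFamW S w) A ∧ A.card = d := by
  obtain ⟨i, hmono, hfull⟩ := h
  set A : Finset ℕ := Finset.image i Finset.univ with hA
  have hcard : A.card = d := by
    rw [hA, Finset.card_image_of_injective _ hmono.injective, Finset.card_univ, Fintype.card_fin]
  refine ⟨A.sup id + 1, A, ?_, hcard⟩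
  intro B hB
  obtain ⟨t, ht⟩ := hfull (fun j => decide (i j ∈ B))
  refine ⟨{x | x < A.sup id + 1 ∧ S (t + x) = true}, ⟨t, rfl⟩, ?_⟩
  intro a ha
  obtain ⟨j, _, rfl⟩ := Finset.mem_image.mp ha
  have hlt : i j < A.sup id + 1 := Nat.lt_succ_of_le (Finset.le_sup (f := id) ha)
  have := ht j
  simp only [Set.mem_setOf_eq, hlt, true_and]
  rw [Nat.add_comm, this]
  simp

lemma shatter_to_mask (S : ℕ → Bool) (w : ℕ) (A : Finset ℕ)
    (h : FamShatters (subFamW S w) A) : HasFullMask S A.card := by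
  set i : Fin A.card → ℕ := fun j => (A.orderIsoOfFin rfl j : ℕ) with hi
  have himem : ∀ j, i j ∈ A := fun j => (A.orderIsoOfFin rfl j).2
  have hmono : StrictMono i := fun a b hab => by
    exact_mod_cast (A.orderIsoOfFin rfl).strictMono hab
  -- all elements of A are < w
  have hsmall : ∀ a ∈ A, a < w := by
    obtain ⟨C, ⟨t, rfl⟩, hC⟩ := h A le_rfl
    intro a ha
    exact ((hC a ha).mpr ha).1
  refine ⟨i, hmono, ?_⟩
  intro b
  set B : Finset ℕ := Finset.image i (Finset.univ.filter (fun j => b j = true)) with hBdef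
  have hB : B ⊆ A := by
    intro x hx
    obtain ⟨j, _, rfl⟩ := Finset.mem_image.mp hx
    exact himem j
  obtain ⟨C, ⟨t, rfl⟩, hC⟩ := h B hB
  refine ⟨t, fun j => ?_⟩
  have hmem := hC (i j) (himem j)
  have hBiff : i j ∈ B ↔ b j = true := by
    constructor
    · intro hx
      obtain ⟨j', hj', hj'eq⟩ := Finset.mem_image.mp hx
      have : j' = j := hmono.injective hj'eq
      subst this
      exact (Finset.mem_filter.mp hj').2
    · intro hx
      exact Finset.mem_image.mpr ⟨j, Finset.mem_filter.mpr ⟨Finset.mem_univ _, hx⟩, rfl⟩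
  simp only [Set.mem_setOf_eq, hsmall _ (himem j), true_and] at hmem
  rw [hBiff] at hmem
  rw [Nat.add_comm] at hmem
  cases hb : b j
  · rw [hb] at hmem; simp at hmem; simp [hmem]
  · rw [hb] at hmem; simp at hmem; exact hmem

/-- For every binary string `S`, the mask dimension equals the
sliding-window dimension. -/
theorem mdim_eq_swdim (S : ℕ → Bool) : Mdim S = SWdim S := by
  apply le_antisymm
  · apply sSup_le
    rintro n ⟨d, hm, rfl⟩
    obtain ⟨w, A, hsh, hcard⟩ := mask_to_shatter S d hm
    have : (d : ℕ∞) ≤ vcDimF (subFamW S w) := le_sSup ⟨A, hsh, by rw [hcard]⟩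
    exact this.trans (le_iSup (fun w => vcDimF (subFamW S w)) w)
  · apply iSup_le
    intro w
    apply sSup_le
    rintro n ⟨A, hsh, rfl⟩
    exact le_sSup ⟨A.card, shatter_to_mask S w A hsh, rfl⟩
end

section
/- The complexity function of the Cantor string satisfies p_x(n) = 2n − 1 for all n > 1. -/
-- The Cantor string: a 1 exactly at indices `2·∑_{k∈K} 3^k`.
open Classical in
noncomputable def cantorStr (n : ℕ) : Bool :=
  if ∃ K : Finset ℕ, n = 2 * ∑ k ∈ K, 3 ^ k then true else false

/-- The complexity function: the number of distinct contiguous substrings of length `n`. -/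
noncomputable def complexity (S : ℕ → Bool) (n : ℕ) : ℕ :=
  Nat.card {s : Fin n → Bool | ∃ t : ℕ, ∀ i : Fin n, s i = S (t + i)}

namespace CantorPf

lemma cantor_iff (n : ℕ) :
    cantorStr n = true ↔ ∃ K : Finset ℕ, n = 2 * ∑ k ∈ K, 3 ^ k := by
  unfold cantorStr
  split <;> simp_all

lemma two_sum_mod3 (K : Finset ℕ) :
    (2 * ∑ k ∈ K, 3 ^ k) % 3 = if 0 ∈ K then 2 else 0 := by
  by_cases h : 0 ∈ K
  · obtain ⟨c, hc⟩ : (3 : ℕ) ∣ ∑ k ∈ K.erase 0, 3 ^ k :=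
      Finset.dvd_sum fun k hk => dvd_pow_self 3 (Finset.ne_of_mem_erase hk)
    have hs := Finset.add_sum_erase K (fun k => 3 ^ k) h
    simp only [h, if_true]
    norm_num at hs
    omega
  · obtain ⟨c, hc⟩ : (3 : ℕ) ∣ ∑ k ∈ K, 3 ^ k :=
      Finset.dvd_sum fun k hk => dvd_pow_self 3 (fun h' => h (h' ▸ hk))
    simp only [h, if_false]
    omega

lemma shift_up (K : Finset ℕ) :
    ∑ k ∈ K.image (· + 1), 3 ^ k = 3 * ∑ k ∈ K, 3 ^ k := by
  rw [Finset.sum_image (by intro x _ y _ h; simp only at h; omega), Finset.mul_sum]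
  exact Finset.sum_congr rfl fun k _ => by ring

lemma shift_down (K : Finset ℕ) (h0 : 0 ∉ K) :
    ∑ k ∈ K, 3 ^ k = 3 * ∑ k ∈ K.image (· - 1), 3 ^ k := by
  have hinj : ∀ x ∈ K, ∀ y ∈ K, x - 1 = y - 1 → x = y := by
    intro x hx y hy hxy
    have hx0 : x ≠ 0 := fun h => h0 (h ▸ hx)
    have hy0 : y ≠ 0 := fun h => h0 (h ▸ hy)
    omega
  rw [Finset.sum_image hinj, Finset.mul_sum]
  apply Finset.sum_congr rfl
  intro k hk
  have hk0 : k ≠ 0 := fun h => h0 (h ▸ hk)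
  have h1 : k - 1 + 1 = k := by omega
  calc 3 ^ k = 3 ^ (k - 1 + 1) := by rw [h1]
  _ = 3 * 3 ^ (k - 1) := by ring

lemma c1 {t : ℕ} (h : t % 3 = 1) : cantorStr t = false := by
  rw [← Bool.not_eq_true, cantor_iff]
  rintro ⟨K, rfl⟩
  have := two_sum_mod3 K
  split at this <;> omega

lemma c3 (q : ℕ) : cantorStr (3 * q) = cantorStr q := by
  have h : cantorStr (3 * q) = true ↔ cantorStr q = true := by
    rw [cantor_iff, cantor_iff]
    constructor
    · rintro ⟨K, hK⟩
      have h0 : 0 ∉ K := by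
        intro h0
        have h2 := two_sum_mod3 K
        rw [← hK, if_pos h0] at h2; omega
      have hd := shift_down K h0
      exact ⟨K.image (· - 1), by omega⟩
    · rintro ⟨K, rfl⟩
      exact ⟨K.image (· + 1), by rw [shift_up]; ring⟩
  cases h3 : cantorStr (3 * q) <;> cases hq : cantorStr q <;> simp_all

lemma c32 (q : ℕ) : cantorStr (3 * q + 2) = cantorStr q := by
  have h : cantorStr (3 * q + 2) = true ↔ cantorStr q = true := by
    rw [cantor_iff, cantor_iff]
    constructor
    · rintro ⟨K, hK⟩
      have h0 : 0 ∈ K := by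
        by_contra h0
        have h2 := two_sum_mod3 K
        rw [← hK, if_neg h0] at h2; omega
      have hs := Finset.add_sum_erase K (fun k => 3 ^ k) h0
      norm_num at hs
      have hd := shift_down _ (Finset.notMem_erase 0 K)
      exact ⟨(K.erase 0).image (· - 1), by omega⟩
    · rintro ⟨K, rfl⟩
      refine ⟨insert 0 (K.image (· + 1)), ?_⟩
      rw [Finset.sum_insert (by simp), shift_up]
      norm_num; ring
  cases h3 : cantorStr (3 * q + 2) <;> cases hq : cantorStr q <;> simp_all

lemma x0 : cantorStr 0 = true := (cantor_iff 0).mpr ⟨∅, by simp⟩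
lemma x1 : cantorStr 1 = false := c1 (by norm_num)
lemma x2 : cantorStr 2 = true := by
  have := c32 0; norm_num at this; rw [this, x0]
lemma x3 : cantorStr 3 = false := by
  have := c3 1; norm_num at this; rw [this, x1]
lemma x4 : cantorStr 4 = false := c1 (by norm_num)
lemma x5 : cantorStr 5 = false := by
  have := c32 1; norm_num at this; rw [this, x1]
lemma x6 : cantorStr 6 = true := by
  have := c3 2; norm_num at this; rw [this, x2]

lemma no11 : ∀ t, ¬(cantorStr t = true ∧ cantorStr (t + 1) = true) := by
  intro t
  induction t using Nat.strong_induction_on with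
  | _ t ih =>
    rintro ⟨h1, h2⟩
    rcases (by omega : t % 3 = 0 ∨ t % 3 = 1 ∨ t % 3 = 2) with h | h | h
    · rw [c1 (t := t + 1) (by omega)] at h2; exact Bool.noConfusion h2
    · rw [c1 h] at h1; exact Bool.noConfusion h1
    · have ht : t = 3 * (t / 3) + 2 := by omega
      have ht1 : t + 1 = 3 * (t / 3 + 1) := by omega
      rw [ht, c32] at h1
      rw [ht1, c3] at h2
      exact ih (t / 3) (by omega) ⟨h1, h2⟩

lemma zero_window : ∀ K : ℕ, ∀ i < 3 ^ K, cantorStr (3 ^ K + i) = false := by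
  intro K
  induction K with
  | zero =>
    intro i hi
    interval_cases i
    · exact x1
  | succ K ih =>
    intro i hi
    have h3 : (3:ℕ) ^ (K + 1) = 3 * 3 ^ K := by ring
    rcases (by omega : i % 3 = 0 ∨ i % 3 = 1 ∨ i % 3 = 2) with h | h | h
    · rw [show 3 ^ (K+1) + i = 3 * (3 ^ K + i / 3) from by omega, c3]
      exact ih _ (by omega)
    · exact c1 (by omega)
    · rw [show 3 ^ (K+1) + i = 3 * (3 ^ K + i / 3) + 2 from by omega, c32]
      exact ih _ (by omega)


/-! ### Windows and factors -/

noncomputable def win (n t : ℕ) : Fin n → Bool := fun i => cantorStr (t + i.val)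

def Fa (n : ℕ) : Set (Fin n → Bool) :=
  {s | ∃ t : ℕ, ∀ i : Fin n, s i = cantorStr (t + i)}

def Fs (n : ℕ) : Set (Fin n → Bool) := {w | w ∈ Fa n ∧ w ≠ fun _ => false}

lemma win_mem_Fa (n t : ℕ) : win n t ∈ Fa n := ⟨t, fun _ => rfl⟩

lemma mem_Fa_iff {n : ℕ} {w : Fin n → Bool} : w ∈ Fa n ↔ ∃ t, w = win n t := by
  constructor
  · rintro ⟨t, ht⟩; exact ⟨t, funext fun i => ht i⟩
  · rintro ⟨t, rfl⟩; exact win_mem_Fa n t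

/-! ### The blow-up map -/

def blow (r n m : ℕ) (hm : n + r ≤ 3 * m) (v : Fin m → Bool) : Fin n → Bool :=
  fun i => if (r + i.val) % 3 = 1 then false
           else v ⟨(r + i.val) / 3, by have := i.isLt; omega⟩

lemma blow_eval1 {r n m : ℕ} {hm : n + r ≤ 3 * m} {v : Fin m → Bool} {i : ℕ}
    (hi : i < n) (h1 : (r + i) % 3 = 1) :
    blow r n m hm v ⟨i, hi⟩ = false := by simp [blow, h1]

lemma blow_eval {r n m : ℕ} {hm : n + r ≤ 3 * m} {v : Fin m → Bool} {i : ℕ}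
    (hi : i < n) (h1 : (r + i) % 3 ≠ 1) (d : Fin m) (hd : (r + i) / 3 = d.val) :
    blow r n m hm v ⟨i, hi⟩ = v d := by
  simp only [blow]
  rw [if_neg h1]
  exact congrArg v (Fin.ext (by simpa using hd))

lemma win_eq_blow (n q r : ℕ) (hr : r < 3) (m : ℕ) (hm : n + r ≤ 3 * m) :
    win n (3 * q + r) = blow r n m hm (win m q) := by
  funext i
  by_cases h1 : (r + i.val) % 3 = 1
  · rw [show i = (⟨i.val, i.isLt⟩ : Fin n) from rfl, blow_eval1 i.isLt h1]
    exact c1 (t := 3 * q + r + i.val) (by omega)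
  · have hd : (r + i.val) / 3 < m := by have := i.isLt; omega
    rw [show i = (⟨i.val, i.isLt⟩ : Fin n) from rfl,
        blow_eval i.isLt h1 ⟨(r + i.val) / 3, hd⟩ rfl]
    show cantorStr (3 * q + r + i.val) = cantorStr (q + (r + i.val) / 3)
    rcases (by omega : (r + i.val) % 3 = 0 ∨ (r + i.val) % 3 = 2) with h | h
    · rw [show 3 * q + r + i.val = 3 * (q + (r + i.val) / 3) from by omega, c3]
    · rw [show 3 * q + r + i.val = 3 * (q + (r + i.val) / 3) + 2 from by omega, c32]

lemma exists_index {n r m : ℕ} (hr : r < 3) (hn : 2 ≤ n) (hm2 : 3 * m ≤ n + r + 2)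
    (d : Fin m) :
    ∃ i : ℕ, ∃ hi : i < n, (r + i) % 3 ≠ 1 ∧ (r + i) / 3 = d.val := by
  rcases le_or_gt r (3 * d.val) with h | h
  · exact ⟨3 * d.val - r, by have := d.isLt; omega, by omega, by omega⟩
  · exact ⟨2 - r, by omega, by omega, by omega⟩

lemma blow_zero {r n m : ℕ} (hm : n + r ≤ 3 * m) :
    blow r n m hm (fun _ => false) = (fun _ => false) := by
  funext i; simp [blow]

lemma blow_nonzero {r n m : ℕ} (hr : r < 3) (hn : 2 ≤ n) (hm : n + r ≤ 3 * m)
    (hm2 : 3 * m ≤ n + r + 2) {v : Fin m → Bool} (hv : v ≠ fun _ => false) :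
    blow r n m hm v ≠ fun _ => false := by
  obtain ⟨d, hd⟩ := Function.ne_iff.mp hv
  have hdt : v d = true := by simpa using hd
  obtain ⟨i, hi, h1, h2⟩ := exists_index hr hn hm2 d
  intro h
  have := congrFun h ⟨i, hi⟩
  rw [blow_eval hi h1 d h2] at this
  simp [hdt] at this

lemma blow_inj {r n m : ℕ} (hr : r < 3) (hn : 2 ≤ n) (hm : n + r ≤ 3 * m)
    (hm2 : 3 * m ≤ n + r + 2) {v v' : Fin m → Bool}
    (h : blow r n m hm v = blow r n m hm v') : v = v' := by
  funext d
  obtain ⟨i, hi, h1, h2⟩ := exists_index hr hn hm2 d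
  have := congrFun h ⟨i, hi⟩
  rwa [blow_eval hi h1 d h2, blow_eval hi h1 d h2] at this

/-- The core disjointness argument. -/
lemma core {n : ℕ} (hn : 4 ≤ n) {r r' m m' : ℕ}
    {hm : n + r ≤ 3 * m} {hm' : n + r' ≤ 3 * m'}
    {v : Fin m → Bool} {v' : Fin m' → Bool}
    (heq : blow r n m hm v = blow r' n m' hm' v')
    {i : ℕ} (hi : i < n) (ht : blow r n m hm v ⟨i, hi⟩ = true)
    (h0 : (r + i) % 3 = 0) (h2 : (r' + i) % 3 = 2) : False := by
  have hdm : (r + i) / 3 < m := by omega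
  have hvd : v ⟨(r + i) / 3, hdm⟩ = true := by
    rwa [blow_eval hi (by omega) ⟨(r + i) / 3, hdm⟩ rfl] at ht
  by_cases hc : i + 2 < n
  · have e1 : blow r n m hm v ⟨i + 2, hc⟩ = true := by
      rw [blow_eval hc (by omega) ⟨(r + i) / 3, hdm⟩ (by show (r + (i + 2)) / 3 = (r + i) / 3; omega)]
      exact hvd
    have e2 : blow r' n m' hm' v' ⟨i + 2, hc⟩ = false := blow_eval1 hc (by omega)
    rw [heq] at e1
    rw [e1] at e2
    exact Bool.noConfusion e2
  · have hi2 : 2 ≤ i := by omega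
    have hdm' : (r' + i) / 3 < m' := by omega
    have hv'd : v' ⟨(r' + i) / 3, hdm'⟩ = true := by
      have h := congrFun heq ⟨i, hi⟩
      rw [ht, blow_eval hi (by omega) ⟨(r' + i) / 3, hdm'⟩ rfl] at h
      exact h.symm
    have hlt : i - 2 < n := by omega
    have e1 : blow r' n m' hm' v' ⟨i - 2, hlt⟩ = v' ⟨(r' + i) / 3, hdm'⟩ :=
      blow_eval hlt (by omega) _ (by show (r' + (i - 2)) / 3 = (r' + i) / 3; omega)
    have e2 : blow r n m hm v ⟨i - 2, hlt⟩ = false := blow_eval1 hlt (by omega)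
    rw [heq, e1, hv'd] at e2
    exact Bool.noConfusion e2

/-! ### The decomposition -/

def M (n r : ℕ) : ℕ := (n + r + 2) / 3

lemma hM1 (n r : ℕ) : n + r ≤ 3 * M n r := by unfold M; omega

lemma hM2 (n r : ℕ) : 3 * M n r ≤ n + r + 2 := by unfold M; omega

def Bset (n r : ℕ) : Set (Fin n → Bool) :=
  blow r n (M n r) (hM1 n r) '' Fs (M n r)

lemma Bset_sub (n r : ℕ) (hr : r < 3) (hn : 2 ≤ n) : Bset n r ⊆ Fs n := by
  rintro w ⟨v, ⟨hva, hvnz⟩, rfl⟩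
  obtain ⟨q, rfl⟩ := mem_Fa_iff.mp hva
  constructor
  · exact mem_Fa_iff.mpr ⟨3 * q + r, (win_eq_blow n q r hr _ (hM1 n r)).symm⟩
  · exact blow_nonzero hr hn _ (hM2 n r) hvnz

lemma decomp (n : ℕ) (hn : 2 ≤ n) : Fs n = Bset n 0 ∪ Bset n 1 ∪ Bset n 2 := by
  apply Set.Subset.antisymm
  · rintro w ⟨hwa, hwnz⟩
    obtain ⟨t, rfl⟩ := mem_Fa_iff.mp hwa
    have key : ∀ r, r < 3 → t % 3 = r → win n t ∈ Bset n r := by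
      intro r hr hrt
      have ht : t = 3 * (t / 3) + r := by omega
      refine ⟨win (M n r) (t / 3), ⟨win_mem_Fa _ _, ?_⟩, ?_⟩
      · intro hv0
        apply hwnz
        conv_lhs => rw [ht]
        rw [win_eq_blow n (t / 3) r hr _ (hM1 n r), hv0, blow_zero]
      · conv_rhs => rw [ht]
        rw [win_eq_blow n (t / 3) r hr _ (hM1 n r)]
    rcases (by omega : t % 3 = 0 ∨ t % 3 = 1 ∨ t % 3 = 2) with h | h | h
    · exact Or.inl (Or.inl (key 0 (by norm_num) h))
    · exact Or.inl (Or.inr (key 1 (by norm_num) h))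
    · exact Or.inr (key 2 (by norm_num) h)
  · rintro w ((hw | hw) | hw)
    · exact Bset_sub n 0 (by norm_num) hn hw
    · exact Bset_sub n 1 (by norm_num) hn hw
    · exact Bset_sub n 2 (by norm_num) hn hw

lemma Bset_disj (n : ℕ) (hn : 4 ≤ n) {r r' : ℕ} (hr : r < 3) (hr' : r' < 3)
    (hne : r ≠ r') : Disjoint (Bset n r) (Bset n r') := by
  rw [Set.disjoint_left]
  rintro w ⟨v, ⟨hva, hvnz⟩, rfl⟩ ⟨v', ⟨hva', hvnz'⟩, heq⟩
  obtain ⟨d, hd⟩ := Function.ne_iff.mp hvnz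
  have hdt : v d = true := by simpa using hd
  obtain ⟨i, hi, h1, h2⟩ := exists_index hr (by omega) (hM2 n r) d
  have ht : blow r n (M n r) (hM1 n r) v ⟨i, hi⟩ = true := by
    rw [blow_eval hi h1 d h2]; exact hdt
  have h1' : (r' + i) % 3 ≠ 1 := by
    intro h
    have hf := blow_eval1 (hm := hM1 n r') (v := v') hi h
    rw [heq, ht] at hf
    exact Bool.noConfusion hf
  rcases (by omega : ((r + i) % 3 = 0 ∧ (r' + i) % 3 = 2) ∨
      ((r + i) % 3 = 2 ∧ (r' + i) % 3 = 0)) with ⟨ha, hb⟩ | ⟨ha, hb⟩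
  · exact core hn heq.symm hi ht ha hb
  · have ht' : blow r' n (M n r') (hM1 n r') v' ⟨i, hi⟩ = true := by rw [heq]; exact ht
    exact core hn heq hi ht' hb ha

lemma Bset_card (n r : ℕ) (hr : r < 3) (hn : 2 ≤ n) :
    (Bset n r).ncard = (Fs (M n r)).ncard :=
  Set.ncard_image_of_injOn fun _ _ _ _ h => blow_inj hr hn (hM1 n r) (hM2 n r) h

/-! ### Base cases -/

lemma nz_of_true {n : ℕ} {w : Fin n → Bool} (i : Fin n) (h : w i = true) :
    w ≠ fun _ => false := by
  intro h0
  rw [h0] at h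
  exact Bool.noConfusion h

lemma Fs2 : Fs 2 = {![true, false], ![false, true]} := by
  ext w
  constructor
  · rintro ⟨hwa, hnz⟩
    obtain ⟨t, rfl⟩ := mem_Fa_iff.mp hwa
    have h11 := no11 t
    have e0 : win 2 t ⟨0, by norm_num⟩ = cantorStr t := by simp [win]
    have e1 : win 2 t ⟨1, by norm_num⟩ = cantorStr (t + 1) := by simp [win]
    cases hb0 : cantorStr t <;> cases hb1 : cantorStr (t + 1)
    · exfalso
      apply hnz
      funext i
      fin_cases i <;> simp [win, hb0, hb1]
    · right
      funext i
      fin_cases i <;> simp [win, hb0, hb1]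
    · left
      funext i
      fin_cases i <;> simp [win, hb0, hb1]
    · exact absurd ⟨hb0, hb1⟩ h11
  · rintro (rfl | rfl)
    · refine ⟨⟨0, fun i => ?_⟩, nz_of_true 0 (by decide)⟩
      fin_cases i <;> simp [x0, x1]
    · refine ⟨⟨1, fun i => ?_⟩, nz_of_true 1 (by decide)⟩
      fin_cases i <;> simp [x1, x2]

lemma Fs3 : Fs 3 = {![true, false, true], ![false, true, false],
    ![true, false, false], ![false, false, true]} := by
  ext w
  constructor
  · rintro ⟨hwa, hnz⟩
    obtain ⟨t, rfl⟩ := mem_Fa_iff.mp hwa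
    have h11 := no11 t
    have h11' := no11 (t + 1)
    rw [show t + 1 + 1 = t + 2 from rfl] at h11'
    cases hb0 : cantorStr t <;> cases hb1 : cantorStr (t + 1) <;>
      cases hb2 : cantorStr (t + 2)
    · exfalso
      apply hnz
      funext i
      fin_cases i <;> simp [win, hb0, hb1, hb2]
    · right; right; right
      funext i
      fin_cases i <;> simp [win, hb0, hb1, hb2]
    · right; left
      funext i
      fin_cases i <;> simp [win, hb0, hb1, hb2]
    · exact absurd ⟨hb1, hb2⟩ h11'
    · right; right; left
      funext i
      fin_cases i <;> simp [win, hb0, hb1, hb2]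
    · left
      funext i
      fin_cases i <;> simp [win, hb0, hb1, hb2]
    · exact absurd ⟨hb0, hb1⟩ h11
    · exact absurd ⟨hb0, hb1⟩ h11
  · rintro (rfl | rfl | rfl | rfl)
    · refine ⟨⟨0, fun i => ?_⟩, nz_of_true 0 (by decide)⟩
      fin_cases i <;> simp [x0, x1, x2]
    · refine ⟨⟨1, fun i => ?_⟩, nz_of_true 1 (by decide)⟩
      fin_cases i <;> simp [x1, x2, x3]
    · refine ⟨⟨2, fun i => ?_⟩, nz_of_true 0 (by decide)⟩
      fin_cases i <;> simp [x2, x3, x4]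
    · refine ⟨⟨4, fun i => ?_⟩, nz_of_true 2 (by decide)⟩
      fin_cases i <;> simp [x4, x5, x6]

lemma card2 : (Fs 2).ncard = 2 := by
  rw [Fs2]
  exact Set.ncard_pair (by decide)

lemma card3 : (Fs 3).ncard = 4 := by
  rw [Fs3]
  rw [Set.ncard_insert_of_notMem (by
    simp only [Set.mem_insert_iff, Set.mem_singleton_iff]
    push_neg
    refine ⟨by decide, by decide, by decide⟩)]
  rw [Set.ncard_insert_of_notMem (by
    simp only [Set.mem_insert_iff, Set.mem_singleton_iff]
    push_neg
    refine ⟨by decide, by decide⟩)]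
  rw [Set.ncard_pair (by decide)]

/-! ### Main induction -/

lemma Fs_card : ∀ n : ℕ, 2 ≤ n → (Fs n).ncard = 2 * n - 2 := by
  intro n
  induction n using Nat.strong_induction_on with
  | _ n ih =>
  intro hn
  rcases (by omega : n = 2 ∨ n = 3 ∨ 4 ≤ n) with rfl | rfl | h4
  · rw [card2]
  · rw [card3]
  · rw [decomp n (by omega)]
    rw [Set.ncard_union_eq (Set.disjoint_union_left.mpr
        ⟨Bset_disj n h4 (by norm_num) (by norm_num) (by norm_num),
         Bset_disj n h4 (by norm_num) (by norm_num) (by norm_num)⟩)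
      (Set.toFinite _) (Set.toFinite _)]
    rw [Set.ncard_union_eq (Bset_disj n h4 (by norm_num) (by norm_num) (by norm_num))
      (Set.toFinite _) (Set.toFinite _)]
    have e : ∀ r, r < 3 → (Bset n r).ncard = 2 * M n r - 2 := by
      intro r hr
      rw [Bset_card n r hr (by omega)]
      exact ih (M n r) (by unfold M; omega) (by unfold M; omega)
    rw [e 0 (by norm_num), e 1 (by norm_num), e 2 (by norm_num)]
    unfold M
    omega

lemma Fa_eq (n : ℕ) : Fa n = insert (fun _ => false) (Fs n) := by
  ext w
  simp only [Set.mem_insert_iff]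
  constructor
  · intro hw
    by_cases h : w = fun _ => false
    · exact Or.inl h
    · exact Or.inr ⟨hw, h⟩
  · rintro (rfl | ⟨h, _⟩)
    · refine ⟨3 ^ n, fun i => ?_⟩
      exact (zero_window n i (lt_trans i.isLt (Nat.lt_pow_self (n := n) (by norm_num)))).symm
    · exact h

end CantorPf

/-- The complexity function of the Cantor string satisfies
`p_x(n) = 2n - 1` for all `n > 1`. -/
theorem cantor_complexity (n : ℕ) (hn : 1 < n) : complexity cantorStr n = 2 * n - 1 := by
  have h1 : complexity cantorStr n = (CantorPf.Fa n).ncard := by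
    unfold complexity
    rw [← Nat.card_coe_set_eq]
    rfl
  rw [h1, CantorPf.Fa_eq n,
    Set.ncard_insert_of_notMem (fun h => h.2 rfl) (Set.toFinite _),
    CantorPf.Fs_card n hn]
  omega
end

section
/- The Thue–Morse sequence has infinite mask dimension. -/
/-- A predicate `P` on `ℕ` (viewed as a binary string) admits a full `d`-mask. -/
def HasFullMaskP (P : ℕ → Prop) (d : ℕ) : Prop :=
  ∃ i : Fin d → ℕ, StrictMono i ∧
    ∀ b : Fin d → Bool, ∃ t : ℕ, ∀ j : Fin d, (P (i j + t) ↔ b j = true)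

/-- The Thue–Morse sequence: `T n = 1` iff the binary representation of `n` has an
odd number of 1's. -/
def thueMorse (n : ℕ) : Prop := Odd ((Nat.digits 2 n).count 1)

lemma tm_double (n : ℕ) : thueMorse (2 * n) ↔ thueMorse n := by
  rcases eq_or_ne n 0 with rfl | h
  · simp
  · unfold thueMorse
    rw [Nat.digits_def' (by norm_num : (1:ℕ) < 2) (by omega)]
    simp [Nat.mul_div_cancel_left, List.count_cons]

lemma tm_double1 (n : ℕ) : thueMorse (2 * n + 1) ↔ ¬ thueMorse n := by
  unfold thueMorse
  rw [Nat.digits_def' (by norm_num : (1:ℕ) < 2) (by omega)]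
  simp [List.count_cons, Nat.mul_add_div, Nat.odd_add_one, Nat.mul_add_mod]

lemma tm_four_mul (n : ℕ) : thueMorse (4 * n) ↔ thueMorse n := by
  have : 4 * n = 2 * (2 * n) := by ring
  rw [this, tm_double, tm_double]

lemma tm_four_mul1 (n : ℕ) : thueMorse (4 * n + 1) ↔ ¬ thueMorse n := by
  have : 4 * n + 1 = 2 * (2 * n) + 1 := by ring
  rw [this, tm_double1, tm_double]

lemma tm_four_mul2 (n : ℕ) : thueMorse (4 * n + 2) ↔ ¬ thueMorse n := by
  have : 4 * n + 2 = 2 * (2 * n + 1) := by ring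
  rw [this, tm_double, tm_double1]

lemma tm_base4 (m : ℕ) : ∀ (c : ℕ → ℕ), (∀ k, c k ≤ 2) →
    (thueMorse (∑ k ∈ Finset.range m, c k * 4 ^ k) ↔
      Odd (∑ k ∈ Finset.range m, min (c k) 1)) := by
  induction m with
  | zero => intro c hc; simp [thueMorse]
  | succ m ih =>
    intro c hc
    have h1 : ∑ k ∈ Finset.range (m+1), c k * 4 ^ k
        = 4 * (∑ k ∈ Finset.range m, c (k+1) * 4 ^ k) + c 0 := by
      rw [Finset.sum_range_succ', Finset.mul_sum]
      simp only [pow_succ, pow_zero, mul_one]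
      congr 1
      refine Finset.sum_congr rfl fun k _ => by ring
    have h2 : ∑ k ∈ Finset.range (m+1), min (c k) 1
        = (∑ k ∈ Finset.range m, min (c (k+1)) 1) + min (c 0) 1 := by
      rw [Finset.sum_range_succ']
    have ihc := ih (fun k => c (k+1)) (fun k => hc (k+1))
    have hc0 : c 0 = 0 ∨ c 0 = 1 ∨ c 0 = 2 := by have := hc 0; omega
    rcases hc0 with h | h | h <;> rw [h1, h2, h]
    · rw [Nat.add_zero, tm_four_mul, ihc]; simp
    · rw [tm_four_mul1, ihc]; simp [Nat.odd_add_one]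
    · rw [tm_four_mul2, ihc]; simp [Nat.odd_add_one]

/-- The Thue–Morse sequence has infinite mask dimension. -/
theorem thueMorse_infinite_mask_dimension : ∀ d : ℕ, HasFullMaskP thueMorse d := by
  intro d
  refine ⟨fun j => 4 ^ (j : ℕ), ?_, ?_⟩
  · intro a b hab
    exact Nat.pow_lt_pow_right (by norm_num) hab
  · intro b
    classical
    set e' : ℕ → ℕ := fun k => if h : k < d then (if b ⟨k, h⟩ then 0 else 1) else 0 with he'
    set S' := ∑ k ∈ Finset.range d, e' k with hS'
    set e : ℕ → ℕ := fun k => if k = d then S' % 2 else e' k with he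
    have he_le : ∀ k, e k ≤ 1 := by
      intro k
      simp only [he, he']
      split
      · omega
      · split
        · split <;> omega
        · omega
    refine ⟨∑ k ∈ Finset.range (d+1), e k * 4 ^ k, fun j => ?_⟩
    set c : ℕ → ℕ := fun k => e k + if k = (j : ℕ) then 1 else 0 with hcdef
    have hjmem : (j : ℕ) ∈ Finset.range (d+1) := by
      simp only [Finset.mem_range]; omega
    have hsum : 4 ^ (j : ℕ) + ∑ k ∈ Finset.range (d+1), e k * 4 ^ k
        = ∑ k ∈ Finset.range (d+1), c k * 4 ^ k := by
      have : ∀ k ∈ Finset.range (d+1),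
          c k * 4 ^ k = e k * 4 ^ k + (if k = (j : ℕ) then 4 ^ (j:ℕ) else 0) := by
        intro k _
        by_cases h : k = (j : ℕ) <;> simp [hcdef, h] <;> ring
      rw [Finset.sum_congr rfl this, Finset.sum_add_distrib,
        Finset.sum_ite_eq' _ _ (fun _ => 4 ^ (j:ℕ)), if_pos hjmem]
      ring
    rw [hsum, tm_base4 _ c (fun k => by have := he_le k; simp only [hcdef]; split <;> omega)]
    -- compute the sum of mins
    have hsplit : ∑ k ∈ Finset.range (d+1), min (c k) 1
        = min (c (j:ℕ)) 1 + ∑ k ∈ (Finset.range (d+1)).erase (j:ℕ), min (c k) 1 := by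
      exact (Finset.add_sum_erase _ (fun k => min (c k) 1) hjmem).symm
    have hcj : min (c (j:ℕ)) 1 = 1 := by
      have : c (j:ℕ) = e (j:ℕ) + 1 := by simp [hcdef]
      omega
    have herase : ∀ k ∈ (Finset.range (d+1)).erase (j:ℕ), min (c k) 1 = e k := by
      intro k hk
      have hne : k ≠ (j:ℕ) := Finset.ne_of_mem_erase hk
      have := he_le k
      simp only [hcdef, if_neg hne]; omega
    rw [hsplit, hcj, Finset.sum_congr rfl herase]
    -- parity facts
    have htot : (∑ k ∈ (Finset.range (d+1)).erase (j:ℕ), e k) + e (j:ℕ)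
        = ∑ k ∈ Finset.range (d+1), e k := by
      rw [add_comm, Finset.add_sum_erase _ _ hjmem]
    have heven : Even (∑ k ∈ Finset.range (d+1), e k) := by
      rw [Finset.sum_range_succ]
      have h1 : ∀ k ∈ Finset.range d, e k = e' k := by
        intro k hk
        have : k ≠ d := by simp only [Finset.mem_range] at hk; omega
        simp [he, this]
      have h2 : e d = S' % 2 := by simp [he]
      rw [Finset.sum_congr rfl h1, h2, ← hS', Nat.even_iff]
      omega
    have hej : e (j:ℕ) = if b j then 0 else 1 := by
      have h1 : (j:ℕ) ≠ d := by omega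
      simp only [he, if_neg h1, he', dif_pos j.isLt, Fin.eta]
    have htot2 : ((Finset.range (d+1)).erase (j:ℕ)).sum e + e (j:ℕ)
        = (Finset.range (d+1)).sum e := htot
    have heven2 : Even ((Finset.range (d+1)).sum e) := heven
    rw [Nat.even_iff] at heven2
    rw [Nat.odd_iff]
    cases hb : b j
    · rw [hb] at hej
      norm_num at hej
      simp only [hb, Bool.false_eq_true, iff_false]
      omega
    · rw [hb] at hej
      norm_num at hej
      simp only [hb, iff_true]
      omega
end

section
/- The infinite binary string with a 1 exactly at indices that are powers of two has mask dimension exactly 2. -/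
/-- The string with a 1 exactly at indices that are powers of two. -/
def powersOfTwo (n : ℕ) : Prop := ∃ k : ℕ, n = 2 ^ k

lemma npot {n : ℕ} (h3 : n ≠ 0) (h1 : n ≠ 1) (h2 : n ≠ 2) (h4 : n ≠ 4) (h8 : n < 8) :
    ¬ powersOfTwo n := by
  rintro ⟨k, rfl⟩
  have hk : k < 3 := by
    by_contra hc
    push_neg at hc
    have : (2:ℕ)^3 ≤ 2^k := Nat.pow_le_pow_right (by norm_num) hc
    omega
  interval_cases k <;> simp_all

lemma pot_unique {a p q p' q' : ℕ} (ha : 0 < a)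
    (h1 : 2^p + a = 2^q) (h2 : 2^p' + a = 2^q') : p = p' := by
  have hpq : p < q := by
    have : (2:ℕ)^p < 2^q := by omega
    exact (Nat.pow_lt_pow_iff_right (by norm_num)).mp this
  have hpq' : p' < q' := by
    have : (2:ℕ)^p' < 2^q' := by omega
    exact (Nat.pow_lt_pow_iff_right (by norm_num)).mp this
  have key : ∀ r s : ℕ, r < s → 2^r + a = 2^s → a.factorization 2 = r := by
    intro r s hrs heq
    have hfac : a = 2^r * (2^(s-r) - 1) := by
      have h2 : (2:ℕ)^s = 2^r * 2^(s-r) := by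
        rw [← pow_add]; congr 1; omega
      have h1' : 1 ≤ (2:ℕ)^(s-r) := Nat.one_le_two_pow
      rw [Nat.mul_sub_one]
      omega
    have hodd : ¬ (2 ∣ (2^(s-r) - 1)) := by
      have : (2:ℕ) ∣ 2^(s-r) := dvd_pow_self 2 (by omega)
      have h1' : 1 ≤ (2:ℕ)^(s-r) := Nat.one_le_two_pow
      omega
    have hne : (2:ℕ)^(s-r) - 1 ≠ 0 := by
      have : (2:ℕ)^1 ≤ 2^(s-r) := Nat.pow_le_pow_right (by norm_num) (by omega)
      simp at this; omega
    rw [hfac, Nat.factorization_mul (by positivity) hne]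
    simp [Nat.Prime.factorization_pow, Nat.factorization_eq_zero_of_not_dvd hodd,
      Nat.Prime.factorization_self Nat.prime_two]
  rw [← key p q hpq h1, key p' q' hpq' h2]

/-- The binary string supported on the powers of two has mask
dimension exactly 2. -/
theorem powersOfTwo_mask_dimension_two :
    HasFullMaskP powersOfTwo 2 ∧ ∀ d : ℕ, HasFullMaskP powersOfTwo d → d ≤ 2 := by
  constructor
  · refine ⟨![0, 1], by decide, ?_⟩
    intro b
    match hb0 : b 0, hb1 : b 1 with
    | true, true => exact ⟨1, by
        intro j
        fin_cases j <;> simp [hb0, hb1, powersOfTwo]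
        · exact ⟨0, rfl⟩
        · exact ⟨1, rfl⟩⟩
    | true, false => exact ⟨4, by
        intro j
        fin_cases j <;> simp [hb0, hb1, powersOfTwo]
        · exact ⟨2, rfl⟩
        · exact fun k hk => (npot (by norm_num) (by norm_num) (by norm_num) (by norm_num) (by norm_num)) ⟨k, hk⟩⟩
    | false, true => exact ⟨3, by
        intro j
        fin_cases j <;> simp [hb0, hb1, powersOfTwo]
        · exact fun k hk => (npot (by norm_num) (by norm_num) (by norm_num) (by norm_num) (by norm_num)) ⟨k, hk⟩
        · exact ⟨2, rfl⟩⟩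
    | false, false => exact ⟨5, by
        intro j
        fin_cases j <;> simp [hb0, hb1, powersOfTwo]
        · exact fun k hk => (npot (by norm_num) (by norm_num) (by norm_num) (by norm_num) (by norm_num)) ⟨k, hk⟩
        · exact fun k hk => (npot (by norm_num) (by norm_num) (by norm_num) (by norm_num) (by norm_num)) ⟨k, hk⟩⟩
  · intro d hd
    by_contra hc
    push_neg at hc
    obtain ⟨i, hmono, hmask⟩ := hd
    have h3 : 3 ≤ d := hc
    set j0 : Fin d := ⟨0, by omega⟩
    set j1 : Fin d := ⟨1, by omega⟩
    set j2 : Fin d := ⟨2, by omega⟩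
    obtain ⟨t1, ht1⟩ := hmask (fun _ => true)
    obtain ⟨t2, ht2⟩ := hmask (fun j => decide (j.val < 2))
    obtain ⟨p, hp⟩ := (ht1 j0).mpr rfl
    obtain ⟨q, hq⟩ := (ht1 j1).mpr rfl
    obtain ⟨p', hp'⟩ := (ht2 j0).mpr (by simp [j0])
    obtain ⟨q', hq'⟩ := (ht2 j1).mpr (by simp [j1])
    have h01 : i j0 < i j1 := hmono (by simp [j0, j1, Fin.lt_def])
    set a : ℕ := i j1 - i j0 with ha
    have hapos : 0 < a := by omega
    have e1 : 2^p + a = 2^q := by omega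
    have e2 : 2^p' + a = 2^q' := by omega
    have hpp : p = p' := pot_unique hapos e1 e2
    rw [← hpp] at hp'
    have htt : t1 = t2 := by omega
    have hP2 : powersOfTwo (i j2 + t1) := (ht1 j2).mpr rfl
    have hnP2 : ¬ powersOfTwo (i j2 + t2) := by
      intro h
      have := (ht2 j2).mp h
      simp [j2] at this
    exact hnP2 (htt ▸ hP2)
end

section
/- If A ⊆ ℕ is a Sidon set, then the binary string with 1's exactly at indices in A admits no full 3-mask; hence its mask dimension is at most 2. -/
/-- If `A ⊆ ℕ` is a Sidon set, then the binary string with 1's exactly at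
indices in `A` admits no full 3-mask (hence its mask dimension is at most 2). -/
theorem sidon_no_full_three_mask (A : Set ℕ)
    (hSidon : ∀ d : ℕ, 0 < d → ∀ a b a' b' : ℕ, a ∈ A → b ∈ A → a' ∈ A → b' ∈ A →
      a < b → a' < b' → b - a = d → b' - a' = d → a = a' ∧ b = b') :
    (¬ HasFullMaskP (· ∈ A) 3) ∧ ∀ d : ℕ, HasFullMaskP (· ∈ A) d → d ≤ 2 := by
  have key : ¬ HasFullMaskP (· ∈ A) 3 := by
    rintro ⟨i, hmono, hb⟩
    obtain ⟨t, ht⟩ := hb ![true, true, true]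
    obtain ⟨s, hs⟩ := hb ![true, true, false]
    have h0t : i 0 + t ∈ A := (ht 0).mpr rfl
    have h1t : i 1 + t ∈ A := (ht 1).mpr rfl
    have h2t : i 2 + t ∈ A := (ht 2).mpr rfl
    have h0s : i 0 + s ∈ A := (hs 0).mpr rfl
    have h1s : i 1 + s ∈ A := (hs 1).mpr rfl
    have h2s : ¬ (i 2 + s ∈ A) := fun h => by simpa using (hs 2).mp h
    have h01 : i 0 < i 1 := hmono (by decide)
    have := hSidon (i 1 - i 0) (by omega) (i 0 + t) (i 1 + t) (i 0 + s) (i 1 + s)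
      h0t h1t h0s h1s (by omega) (by omega) (by omega) (by omega)
    have hts : t = s := by omega
    exact h2s (hts ▸ h2t)
  refine ⟨key, fun d hd => ?_⟩
  by_contra h
  push_neg at h
  apply key
  obtain ⟨i, hmono, hb⟩ := hd
  refine ⟨fun j => i ⟨j, by omega⟩, ?_, ?_⟩
  · intro a b hab
    exact hmono (Fin.mk_lt_mk.mpr hab)
  · intro b
    obtain ⟨t, ht⟩ := hb (fun j => if hj : (j : ℕ) < 3 then b ⟨j, hj⟩ else false)
    exact ⟨t, fun j => by simpa [j.isLt] using ht ⟨j, by omega⟩⟩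
end

section
/- For any d ∈ ℕ and any sequence of real numbers r_i, each of VC dimension at most d, converging to a limit r*, the VC dimension of r* is at most d. -/
/-- The binary digit string of a real number `r`: sign and binary point are ignored,
the integer digits (most significant first) are followed by the fractional digits, and
for dyadic rationals the representation ending in `0*` is chosen. -/
noncomputable def rdigit (r : ℝ) (n : ℕ) : Bool :=
  let x : ℝ := |r|
  let m : ℤ := if x < 1 then 0 else (Nat.log 2 ⌊x⌋₊ + 1 : ℤ)
  decide (⌊x * 2 ^ ((n : ℤ) + 1 - m)⌋ % 2 = 1)

/-- The VC dimension of a real number: the VC dimension of its binary digit string. -/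
noncomputable def VCdimR (r : ℝ) : ℕ∞ := VCdim (rdigit r)

/-- vcDimF ≤ d iff every shattered set has card ≤ d. -/
lemma vcdim_le_iff (F : Set (Set ℕ)) (d : ℕ) :
    vcDimF F ≤ (d : ℕ∞) ↔ ∀ A : Finset ℕ, FamShatters F A → A.card ≤ d := by
  constructor
  · intro h A hA
    have h1 : (A.card : ℕ∞) ≤ (d : ℕ∞) := le_trans (le_sSup (show (A.card:ℕ∞) ∈ {n : ℕ∞ | ∃ A : Finset ℕ, FamShatters F A ∧ (A.card : ℕ∞) = n} from ⟨A, hA, rfl⟩)) h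
    exact_mod_cast h1
  · intro h
    apply sSup_le
    rintro n ⟨A, hA, rfl⟩
    exact_mod_cast h A hA

/-- uniformization helper -/
lemma finset_uniform {α : Type*} (s : Finset α) (P : α → ℕ → Prop)
    (mono : ∀ a m n, m ≤ n → P a m → P a n) (h : ∀ a ∈ s, ∃ N, P a N) :
    ∃ N, ∀ a ∈ s, P a N := by
  classical
  induction s using Finset.induction_on with
  | empty => exact ⟨0, by simp⟩
  | @insert a s ha ih =>
    obtain ⟨N1, h1⟩ := ih (fun b hb => h b (Finset.mem_insert_of_mem hb))
    obtain ⟨N2, h2⟩ := h a (Finset.mem_insert_self a s)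
    refine ⟨max N1 N2, fun b hb => ?_⟩
    rcases Finset.mem_insert.mp hb with rfl | hb'
    · exact mono b N2 _ (le_max_right _ _) h2
    · exact mono b N1 _ (le_max_left _ _) (h1 b hb')

/-- Shattering by subFam depends on finitely many values of S. -/
lemma exists_bound {S : ℕ → Bool} {A : Finset ℕ} (h : FamShatters (subFam S) A) :
    ∃ N : ℕ, ∀ S' : ℕ → Bool, (∀ k, k < N → S' k = S k) → FamShatters (subFam S') A := by
  have key : ∀ B ∈ A.powerset, ∃ N : ℕ, ∀ S' : ℕ → Bool, (∀ k, k < N → S' k = S k) →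
      ∃ C ∈ subFam S', ∀ i ∈ A, (i ∈ C ↔ i ∈ B) := by
    intro B hB
    obtain ⟨C, hC, htr⟩ := h B (Finset.mem_powerset.mp hB)
    obtain ⟨t, w, rfl⟩ := hC
    refine ⟨t + A.sup id + 1, fun S' hS' => ⟨{i | i < w ∧ S' (t+i) = true}, ⟨t, w, rfl⟩,
      fun i hi => ?_⟩⟩
    have hle : i ≤ A.sup id := Finset.le_sup (f := id) hi
    have heq : S' (t+i) = S (t+i) := hS' _ (by omega)
    have := htr i hi
    simp only [Set.mem_setOf_eq] at this ⊢
    rw [heq]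
    exact this
  obtain ⟨N, hN⟩ := finset_uniform A.powerset _
    (fun B m n hmn hm S' hS' => hm S' (fun k hk => hS' k (lt_of_lt_of_le hk hmn))) key
  exact ⟨N, fun S' hS' B hB => hN B (Finset.mem_powerset.mpr hB) S' hS'⟩

/-- The key combinatorial transfer lemma: if D is zero past M, and E agrees with D
below M and is true on (M, 2M+1], then any set shattered by subFam D can be replaced
by an equally large set shattered by subFam E. -/
lemma transfer (D E : ℕ → Bool) (M : ℕ)
    (h1 : ∀ k, k < M → E k = D k)
    (h2 : ∀ k, M < k → D k = false)
    (h3 : ∀ k, M < k → k ≤ 2*M+1 → E k = true)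
    (A : Finset ℕ) (hAne : A.Nonempty)
    (hsh : FamShatters (subFam D) A) :
    ∃ A' : Finset ℕ, A'.card = A.card ∧ FamShatters (subFam E) A' := by
  classical
  set a := A.max' hAne with hadef
  have haA : a ∈ A := A.max'_mem hAne
  have hlt : ∀ b ∈ A.erase a, b < a := fun b hb =>
    lt_of_le_of_ne (A.le_max' b (Finset.mem_of_mem_erase hb)) (Finset.ne_of_mem_erase hb)
  have key : ∀ B0 : Finset ℕ, B0 ⊆ A.erase a →
      ∃ t : ℕ, t + a ≤ M ∧ (∀ i ∈ A.erase a, (E (t+i) = true ↔ i ∈ B0)) := by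
    intro B0 hB0
    have hsub : insert a B0 ⊆ A := by
      intro z hz
      rcases Finset.mem_insert.mp hz with rfl | hz'
      · exact haA
      · exact Finset.mem_of_mem_erase (hB0 hz')
    obtain ⟨C, hC, htr⟩ := hsh (insert a B0) hsub
    obtain ⟨t, w, rfl⟩ := hC
    have ha' : a ∈ {i | i < w ∧ D (t+i) = true} :=
      (htr a haA).mpr (Finset.mem_insert_self a B0)
    obtain ⟨haw, haD⟩ := ha'
    have htaM : t + a ≤ M := by
      by_contra hcon
      push_neg at hcon
      rw [h2 _ hcon] at haD
      exact Bool.false_ne_true haD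
    refine ⟨t, htaM, fun i hi => ?_⟩
    have hia : i < a := hlt i hi
    have hiA : i ∈ A := Finset.mem_of_mem_erase hi
    have hiw : i < w := lt_trans hia haw
    have hE : E (t+i) = D (t+i) := h1 _ (by omega)
    have hmem := htr i hiA
    simp only [Set.mem_setOf_eq] at hmem
    constructor
    · intro hEt
      rcases Finset.mem_insert.mp (hmem.mp ⟨hiw, by rw [← hE]; exact hEt⟩) with rfl | hB
      · omega
      · exact hB
    · intro hiB
      have := hmem.mpr (Finset.mem_insert_of_mem hiB)
      rw [hE]
      exact this.2
  obtain ⟨t0, ht0, _⟩ := key ∅ (Finset.empty_subset _)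
  have haM : a ≤ M := le_trans (Nat.le_add_left a t0) ht0
  refine ⟨insert (M+1) (A.erase a), ?_, ?_⟩
  · rw [Finset.card_insert_of_notMem (fun hmem => by have := hlt _ hmem; omega),
      Finset.card_erase_of_mem haA]
    have : 1 ≤ A.card := Finset.card_pos.mpr hAne
    omega
  · intro B' hB'
    set B0 := B'.erase (M+1) with hB0def
    have hB0 : B0 ⊆ A.erase a := by
      intro z hz
      have hz1 : z ∈ B' := Finset.mem_of_mem_erase hz
      rcases Finset.mem_insert.mp (hB' hz1) with rfl | hz2
      · exact absurd rfl (Finset.ne_of_mem_erase hz)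
      · exact hz2
    obtain ⟨t, htM, htE⟩ := key B0 hB0
    have htM' : t ≤ M := by omega
    by_cases hMB : (M+1) ∈ B'
    · refine ⟨{i | i < M+2 ∧ E (t+i) = true}, ⟨t, M+2, rfl⟩, fun i hi => ?_⟩
      rcases Finset.mem_insert.mp hi with rfl | hi'
      · have hEt : E (t + (M+1)) = true := h3 _ (by omega) (by omega)
        exact iff_of_true ⟨by omega, hEt⟩ hMB
      · have hia : i < a := hlt i hi'
        have hiB : i ∈ B0 ↔ i ∈ B' := by
          rw [hB0def, Finset.mem_erase]
          have : i ≠ M + 1 := by omega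
          tauto
        simp only [Set.mem_setOf_eq]
        rw [← hiB, ← htE i hi']
        have : i < M + 2 := by omega
        tauto
    · refine ⟨{i | i < M+1 ∧ E (t+i) = true}, ⟨t, M+1, rfl⟩, fun i hi => ?_⟩
      rcases Finset.mem_insert.mp hi with rfl | hi'
      · exact iff_of_false (fun h => by simp only [Set.mem_setOf_eq] at h; omega) hMB
      · have hia : i < a := hlt i hi'
        have hiB : i ∈ B0 ↔ i ∈ B' := by
          rw [hB0def, Finset.mem_erase]
          have : i ≠ M + 1 := by omega
          tauto
        simp only [Set.mem_setOf_eq]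
        rw [← hiB, ← htE i hi']
        have : i < M + 1 := by omega
        tauto

noncomputable def mex (x : ℝ) : ℤ := if x < 1 then 0 else (Nat.log 2 ⌊x⌋₊ + 1 : ℤ)

lemma rdigit_eq' (r : ℝ) (n : ℕ) :
    rdigit r n = decide (⌊|r| * 2 ^ ((n : ℤ) + 1 - mex |r|)⌋ % 2 = 1) := rfl

lemma rdigit_abs (r : ℝ) : rdigit |r| = rdigit r := by
  funext n
  simp only [rdigit, abs_abs]

lemma rdigit_of_nonneg {y : ℝ} (hy : 0 ≤ y) (n : ℕ) :
    rdigit y n = decide (⌊y * 2 ^ ((n : ℤ) + 1 - mex y)⌋ % 2 = 1) := by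
  rw [rdigit_eq', abs_of_nonneg hy]

lemma mex_of_lt_one {x : ℝ} (h : x < 1) : mex x = 0 := if_pos h

lemma mex_of_one_le {x : ℝ} (h : 1 ≤ x) : mex x = (Nat.log 2 ⌊x⌋₊ + 1 : ℤ) :=
  if_neg (not_lt.mpr h)

lemma mex_nonneg (x : ℝ) : 0 ≤ mex x := by
  unfold mex; split <;> omega

/-- not-integer-multiple lemma: infinitely many true digits means x·2^c is never an integer -/
lemma not_int_mul_zpow {x : ℝ} (hx0 : 0 ≤ x)
    (hinf : ∀ n : ℕ, ∃ j, n < j ∧ rdigit x j = true) :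
    ∀ (q : ℤ) (c : ℤ), x * 2 ^ c ≠ (q : ℝ) := by
  intro q c heq
  set m := mex x with hm
  obtain ⟨j, hj1, hj2⟩ := hinf (m + c).toNat
  have hjc : m + c + 1 ≤ (j : ℤ) := by
    have := Int.self_le_toNat (m + c)
    omega
  obtain ⟨e, hez⟩ : ∃ e : ℕ, (e : ℤ) = (j:ℤ) + 1 - m - c :=
    ⟨((j:ℤ) + 1 - m - c).toNat, Int.toNat_of_nonneg (by omega)⟩
  have he1 : 1 ≤ e := by omega
  have hval : x * 2 ^ ((j:ℤ) + 1 - m) = ((q * 2 ^ e : ℤ) : ℝ) := by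
    have : ((j:ℤ) + 1 - m) = c + ((j:ℤ) + 1 - m - c) := by ring
    rw [this, zpow_add₀ (two_ne_zero), ← mul_assoc, heq, ← hez]
    push_cast
    rw [zpow_natCast]
  rw [rdigit_of_nonneg hx0, ← hm, hval, Int.floor_intCast] at hj2
  have hdvd : (2:ℤ) ∣ q * 2 ^ e := Dvd.dvd.mul_left (dvd_pow_self 2 (by omega)) q
  have : (q * 2 ^ e) % 2 = 0 := Int.emod_eq_zero_of_dvd hdvd
  simp [this] at hj2

/-- if all digits after M are false, then x·2^(M+1-mex x) is an integer -/
lemma tail_int {x : ℝ} (hx0 : 0 ≤ x) {M : ℕ}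
    (hM2 : ∀ k, M < k → rdigit x k = false) :
    (↑⌊x * 2 ^ ((M:ℤ) + 1 - mex x)⌋ : ℝ) = x * 2 ^ ((M:ℤ) + 1 - mex x) := by
  classical
  set m := mex x with hm
  set v := x * 2 ^ ((M:ℤ) + 1 - m) with hv
  by_contra hne
  have hfr : 0 < Int.fract v := by
    rcases lt_or_eq_of_le (Int.fract_nonneg v) with h | h
    · exact h
    · exfalso
      apply hne
      have : Int.fract v = v - ⌊v⌋ := rfl
      rw [this] at h
      linarith
  have hex : ∃ n : ℕ, 1 ≤ Int.fract v * 2 ^ n := by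
    obtain ⟨n, hn⟩ := exists_nat_gt (1 / Int.fract v)
    refine ⟨n, ?_⟩
    have h2 : (n:ℝ) < 2 ^ n := by exact_mod_cast Nat.lt_two_pow_self (n := n)
    have : 1 / Int.fract v < 2 ^ n := lt_trans hn h2
    rw [div_lt_iff₀ hfr] at this
    nlinarith [hfr]
  set i := Nat.find hex with hi
  have hspec : 1 ≤ Int.fract v * 2 ^ i := Nat.find_spec hex
  have hi0 : i ≠ 0 := by
    intro h
    rw [h] at hspec
    simp at hspec
    have := Int.fract_lt_one v
    linarith
  have hup : Int.fract v * 2 ^ i < 2 := by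
    have hmin : ¬ (1 ≤ Int.fract v * 2 ^ (i-1)) := Nat.find_min hex (by omega)
    push_neg at hmin
    have : (2:ℝ) ^ i = 2 ^ (i-1) * 2 := by
      rw [← pow_succ]
      congr 1
      omega
    rw [this, ← mul_assoc]
    nlinarith [hmin]
  have hflfr : ⌊Int.fract v * 2 ^ i⌋ = 1 := by
    rw [Int.floor_eq_iff]
    constructor
    · exact_mod_cast hspec
    · push_cast
      linarith
  have hd := hM2 (M + i) (by omega)
  rw [rdigit_of_nonneg hx0, ← hm] at hd
  have hexp : x * 2 ^ (((M+i:ℕ):ℤ) + 1 - m) = v * 2 ^ i := by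
    rw [hv]
    have : (((M+i:ℕ):ℤ) + 1 - m) = ((M:ℤ) + 1 - m) + (i:ℤ) := by push_cast; ring
    rw [this, zpow_add₀ (two_ne_zero), mul_assoc]
    norm_num [zpow_natCast]
  have hvsplit : v * 2 ^ i = ((⌊v⌋ * 2 ^ i : ℤ) : ℝ) + Int.fract v * 2 ^ i := by
    have hva : (⌊v⌋ : ℝ) + Int.fract v = v := Int.floor_add_fract v
    push_cast
    nlinarith [hva]
  have hfloor : ⌊x * 2 ^ (((M+i:ℕ):ℤ) + 1 - m)⌋ = ⌊v⌋ * 2 ^ i + 1 := by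
    rw [hexp, hvsplit, Int.floor_intCast_add, hflfr]
  rw [hfloor] at hd
  have hdvd : (2:ℤ) ∣ ⌊v⌋ * 2 ^ i := Dvd.dvd.mul_left (dvd_pow_self 2 hi0) _
  have hz : (⌊v⌋ * 2 ^ i) % 2 = 0 := Int.emod_eq_zero_of_dvd hdvd
  have : (⌊v⌋ * 2 ^ i + 1) % 2 = 1 := by omega
  simp [this] at hd

/-- min over a finite family plus a cap -/
lemma min_family (δ0 : ℝ) (h0 : 0 < δ0) (N : ℕ) (f : ℕ → ℝ) (hf : ∀ k, 0 < f k) :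
    ∃ δ : ℝ, 0 < δ ∧ δ ≤ δ0 ∧ ∀ k, k < N → δ ≤ f k := by
  classical
  set s := insert δ0 ((Finset.range N).image f) with hs
  have hne : s.Nonempty := ⟨δ0, Finset.mem_insert_self _ _⟩
  refine ⟨s.min' hne, ?_, s.min'_le δ0 (Finset.mem_insert_self _ _),
    fun k hk => s.min'_le _ (Finset.mem_insert_of_mem
      (Finset.mem_image_of_mem f (Finset.mem_range.mpr hk)))⟩
  have hmem : s.min' hne ∈ insert δ0 ((Finset.range N).image f) := s.min'_mem hne
  rcases Finset.mem_insert.mp hmem with h | h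
  · rw [h]; exact h0
  · obtain ⟨k, _, hk⟩ := Finset.mem_image.mp h
    rw [← hk]; exact hf k

/-- digits are locally constant from the right -/
lemma right_main (x : ℝ) (hx0 : 0 ≤ x) (N : ℕ) :
    ∃ δ : ℝ, 0 < δ ∧ ∀ y, x ≤ y → y < x + δ → ∀ k, k < N → rdigit y k = rdigit x k := by
  have hmex : ∃ δ0 : ℝ, 0 < δ0 ∧ ∀ y, x ≤ y → y < x + δ0 → mex y = mex x := by
    by_cases h1 : x < 1
    · exact ⟨1 - x, by linarith, fun y hy1 hy2 => by
        rw [mex_of_lt_one (by linarith), mex_of_lt_one h1]⟩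
    · push_neg at h1
      refine ⟨(⌊x⌋₊:ℝ) + 1 - x, by have := Nat.lt_floor_add_one x; linarith,
        fun y hy1 hy2 => ?_⟩
      have hfl : ⌊y⌋₊ = ⌊x⌋₊ := (Nat.floor_eq_iff (by linarith)).mpr
        ⟨le_trans (Nat.floor_le hx0) hy1, by push_cast; linarith⟩
      rw [mex_of_one_le (le_trans h1 hy1), mex_of_one_le h1, hfl]
  obtain ⟨δ0, hδ0, hst⟩ := hmex
  have hk : ∀ k : ℕ, ∃ δ : ℝ, 0 < δ ∧ ∀ y, x ≤ y → y < x + δ →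
      ⌊y * 2 ^ ((k:ℤ) + 1 - mex x)⌋ = ⌊x * 2 ^ ((k:ℤ) + 1 - mex x)⌋ := by
    intro k
    set c := (2:ℝ) ^ ((k:ℤ) + 1 - mex x) with hc
    have hcpos : 0 < c := by positivity
    refine ⟨((⌊x*c⌋:ℝ) + 1 - x*c)/c, div_pos (by have := Int.lt_floor_add_one (x*c); linarith)
      hcpos, fun y hy1 hy2 => ?_⟩
    rw [Int.floor_eq_iff]
    constructor
    · exact le_trans (Int.floor_le (x*c)) (by nlinarith)
    · have : y * c < x * c + ((⌊x*c⌋:ℝ) + 1 - x*c) := by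
        have h3 : y * c < (x + ((⌊x*c⌋:ℝ) + 1 - x*c)/c) * c := by nlinarith
        rw [add_mul, div_mul_cancel₀ _ (ne_of_gt hcpos)] at h3
        exact h3
      push_cast
      linarith
  choose f hf1 hf2 using hk
  obtain ⟨δ, hδ, hδ0', hδf⟩ := min_family δ0 hδ0 N f hf1
  refine ⟨δ, hδ, fun y hy1 hy2 k hkN => ?_⟩
  have hy0 : 0 ≤ y := le_trans hx0 hy1
  rw [rdigit_of_nonneg hy0, rdigit_of_nonneg hx0,
    hst y hy1 (lt_of_lt_of_le hy2 (by linarith)),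
    hf2 k y hy1 (lt_of_lt_of_le hy2 (by have := hδf k hkN; linarith))]

/-- digits locally constant from the left, at non-dyadic points -/
lemma left_main (x : ℝ) (hx0 : 0 ≤ x)
    (hinf : ∀ n : ℕ, ∃ j, n < j ∧ rdigit x j = true) (N : ℕ) :
    ∃ δ : ℝ, 0 < δ ∧ ∀ y, x - δ < y → y ≤ x → ∀ k, k < N → rdigit y k = rdigit x k := by
  have hni := not_int_mul_zpow hx0 hinf
  have hxpos : 0 < x := by
    rcases lt_or_eq_of_le hx0 with h | h
    · exact h
    · exact absurd (by rw [← h]; norm_num : x * 2 ^ (0:ℤ) = ((0:ℤ):ℝ)) (hni 0 0)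
  have hmex : ∃ δ0 : ℝ, 0 < δ0 ∧ ∀ y, x - δ0 < y → y ≤ x → (0 ≤ y ∧ mex y = mex x) := by
    by_cases h1 : x < 1
    · exact ⟨x, hxpos, fun y hy1 hy2 => ⟨by linarith,
        by rw [mex_of_lt_one (lt_of_le_of_lt hy2 h1), mex_of_lt_one h1]⟩⟩
    · push_neg at h1
      have hflt : (⌊x⌋₊:ℝ) < x := by
        rcases lt_or_eq_of_le (Nat.floor_le hx0) with h | h
        · exact h
        · exact absurd (by rw [zpow_zero, mul_one]; push_cast; exact h.symm :
            x * 2 ^ (0:ℤ) = (((⌊x⌋₊:ℤ)):ℝ)) (hni (⌊x⌋₊:ℤ) 0)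
      have hfl1 : 1 ≤ ⌊x⌋₊ := Nat.floor_pos.mpr h1
      refine ⟨x - ⌊x⌋₊, by linarith, fun y hy1 hy2 => ?_⟩
      have h1y : (⌊x⌋₊:ℝ) < y := by linarith
      have hy1' : 1 ≤ y := le_trans (by exact_mod_cast hfl1 : (1:ℝ) ≤ (⌊x⌋₊:ℝ)) h1y.le
      have hfl : ⌊y⌋₊ = ⌊x⌋₊ := (Nat.floor_eq_iff (by linarith)).mpr
        ⟨h1y.le, lt_of_le_of_lt hy2 (Nat.lt_floor_add_one x)⟩
      exact ⟨by linarith, by rw [mex_of_one_le hy1', mex_of_one_le h1, hfl]⟩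
  obtain ⟨δ0, hδ0, hst⟩ := hmex
  have hk : ∀ k : ℕ, ∃ δ : ℝ, 0 < δ ∧ ∀ y, x - δ < y → y ≤ x →
      ⌊y * 2 ^ ((k:ℤ) + 1 - mex x)⌋ = ⌊x * 2 ^ ((k:ℤ) + 1 - mex x)⌋ := by
    intro k
    set c := (2:ℝ) ^ ((k:ℤ) + 1 - mex x) with hc
    have hcpos : 0 < c := by positivity
    have hfrpos : (⌊x*c⌋:ℝ) < x*c := by
      rcases lt_or_eq_of_le (Int.floor_le (x*c)) with h | h
      · exact h
      · exact absurd h.symm (hni ⌊x*c⌋ _)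
    refine ⟨(x*c - ⌊x*c⌋)/c, div_pos (by linarith) hcpos, fun y hy1 hy2 => ?_⟩
    rw [Int.floor_eq_iff]
    constructor
    · have h3 : (x - (x*c - ⌊x*c⌋)/c) * c = (⌊x*c⌋:ℝ) := by
        field_simp
        ring
      nlinarith
    · have := Int.lt_floor_add_one (x*c)
      push_cast
      nlinarith
  choose f hf1 hf2 using hk
  obtain ⟨δ, hδ, hδ0', hδf⟩ := min_family δ0 hδ0 N f hf1
  refine ⟨δ, hδ, fun y hy1 hy2 k hkN => ?_⟩
  obtain ⟨hy0, hmexy⟩ := hst y (by linarith) hy2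
  rw [rdigit_of_nonneg hy0, rdigit_of_nonneg hx0, hmexy,
    hf2 k y (by have := hδf k hkN; linarith) hy2]

/-- generic floor computation for y just below x, when x has digit tail zero -/
lemma below_generic {x : ℝ} {m : ℤ} {M : ℕ} {K : ℤ}
    (hK : x * 2 ^ ((M:ℤ) + 1 - m) = (K:ℝ)) (hKodd : K % 2 = 1)
    {y : ℝ} (hy1 : x - 2 ^ (m - 2*(M:ℤ) - 2) < y) (hy2 : y < x) :
    (∀ k : ℕ, k < M → ⌊y * 2 ^ ((k:ℤ) + 1 - m)⌋ = ⌊x * 2 ^ ((k:ℤ) + 1 - m)⌋) ∧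
    (∀ k : ℕ, M < k → k ≤ 2*M+1 → ⌊y * 2 ^ ((k:ℤ) + 1 - m)⌋ % 2 = 1) := by
  have hxc : ∀ k : ℕ, x * 2 ^ ((k:ℤ) + 1 - m) = (K:ℝ) * 2 ^ ((k:ℤ) - (M:ℤ)) := by
    intro k
    have h1 : ((k:ℤ) + 1 - m) = ((M:ℤ) + 1 - m) + ((k:ℤ) - (M:ℤ)) := by ring
    rw [h1, zpow_add₀ (two_ne_zero), ← mul_assoc, hK]
  have heps : ∀ k : ℕ, (x - y) * 2 ^ ((k:ℤ) + 1 - m) < 2 ^ ((k:ℤ) - 2*(M:ℤ) - 1) := by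
    intro k
    have h1 : (x - y) < 2 ^ (m - 2*(M:ℤ) - 2) := by linarith
    have h2 : (x - y) * 2 ^ ((k:ℤ) + 1 - m) < 2 ^ (m - 2*(M:ℤ) - 2) * 2 ^ ((k:ℤ) + 1 - m) :=
      mul_lt_mul_of_pos_right h1 (by positivity)
    calc (x - y) * 2 ^ ((k:ℤ) + 1 - m) < 2 ^ (m - 2*(M:ℤ) - 2) * 2 ^ ((k:ℤ) + 1 - m) := h2
      _ = 2 ^ ((k:ℤ) - 2*(M:ℤ) - 1) := by
          rw [← zpow_add₀ (two_ne_zero : (2:ℝ) ≠ 0)]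
          congr 1
          ring
  constructor
  · -- k < M
    intro k hkM
    set c := (2:ℝ) ^ ((k:ℤ) + 1 - m) with hc
    have hcpos : (0:ℝ) < c := by positivity
    obtain ⟨e, hez, he1⟩ : ∃ e : ℕ, ((e:ℤ) = (M:ℤ) - (k:ℤ)) ∧ 1 ≤ e :=
      ⟨M - k, by omega, by omega⟩
    set q := ⌊x * c⌋ with hq
    have hq1 : (q:ℝ) ≤ x * c := Int.floor_le _
    have hq2 : x * c < q + 1 := Int.lt_floor_add_one _
    -- integer inequality q * 2^e ≤ K
    have hintle : q * 2 ^ e ≤ K := by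
      have hmul := mul_le_mul_of_nonneg_right hq1
        (le_of_lt (zpow_pos (by norm_num : (0:ℝ) < 2) ((M:ℤ) - (k:ℤ))))
      rw [hc, hxc k, mul_assoc, ← zpow_add₀ (two_ne_zero : (2:ℝ) ≠ 0)] at hmul
      have hzero : ((k:ℤ) - (M:ℤ)) + ((M:ℤ) - (k:ℤ)) = 0 := by ring
      rw [hzero, zpow_zero, mul_one] at hmul
      have hcast : (q:ℝ) * 2 ^ ((M:ℤ) - (k:ℤ)) = ((q * 2 ^ e : ℤ) : ℝ) := by
        push_cast
        rw [← hez]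
        norm_num [zpow_natCast]
      rw [hcast] at hmul
      exact_mod_cast hmul
    have hz2 : (q * 2 ^ e) % 2 = 0 :=
      Int.emod_eq_zero_of_dvd (Dvd.dvd.mul_left (dvd_pow_self 2 (by omega)) q)
    have hqK : q * 2 ^ e + 1 ≤ K := by
      rcases lt_or_eq_of_le hintle with h | h
      · omega
      · omega
    -- real lower bound: (q:ℝ) ≤ x*c - 2^(k - M)
    have hlow : (q:ℝ) ≤ x * c - 2 ^ ((k:ℤ) - (M:ℤ)) := by
      have hcast : ((q * 2 ^ e + 1 : ℤ) : ℝ) ≤ (K:ℝ) := by exact_mod_cast hqK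
      have hp : (0:ℝ) < 2 ^ ((k:ℤ) - (M:ℤ)) := by positivity
      have hmul := mul_le_mul_of_nonneg_right hcast (le_of_lt hp)
      have hexp : ((q * 2 ^ e + 1 : ℤ) : ℝ) * 2 ^ ((k:ℤ) - (M:ℤ))
          = (q:ℝ) + 2 ^ ((k:ℤ) - (M:ℤ)) := by
        push_cast
        rw [add_mul, one_mul, mul_assoc, ← zpow_natCast (2:ℝ) e,
          ← zpow_add₀ (two_ne_zero : (2:ℝ) ≠ 0), hez]
        norm_num
      rw [hexp] at hmul
      rw [hc, hxc k]
      linarith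
    have hepsk := heps k
    have hepsle : (2:ℝ) ^ ((k:ℤ) - 2*(M:ℤ) - 1) ≤ 2 ^ ((k:ℤ) - (M:ℤ)) :=
      zpow_le_zpow_right₀ one_le_two (by omega)
    have hyc : y * c > (q:ℝ) := by
      have : x * c - y * c < 2 ^ ((k:ℤ) - (M:ℤ)) := by
        have := heps k
        rw [← hc] at this
        have h5 : (x - y) * c = x * c - y * c := by ring
        linarith
      linarith
    rw [Int.floor_eq_iff]
    exact ⟨le_of_lt hyc, by
      have : y * c < x * c := mul_lt_mul_of_pos_right hy2 hcpos
      push_cast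
      linarith⟩
  · -- M < k ≤ 2M+1
    intro k hkM hk2M
    set c := (2:ℝ) ^ ((k:ℤ) + 1 - m) with hc
    have hcpos : (0:ℝ) < c := by positivity
    obtain ⟨e, hez, he1⟩ : ∃ e : ℕ, ((e:ℤ) = (k:ℤ) - (M:ℤ)) ∧ 1 ≤ e :=
      ⟨k - M, by omega, by omega⟩
    have hxk : x * c = ((K * 2 ^ e : ℤ) : ℝ) := by
      rw [hc, hxc k]
      push_cast
      rw [← hez]
      norm_num [zpow_natCast]
    have hup : y * c < ((K * 2 ^ e : ℤ) : ℝ) := by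
      rw [← hxk]
      exact mul_lt_mul_of_pos_right hy2 hcpos
    have hepsle : (2:ℝ) ^ ((k:ℤ) - 2*(M:ℤ) - 1) ≤ 1 := by
      have := zpow_le_zpow_right₀ (one_le_two : (1:ℝ) ≤ 2) (by omega : (k:ℤ) - 2*(M:ℤ) - 1 ≤ 0)
      simpa using this
    have hlow : ((K * 2 ^ e : ℤ) : ℝ) - 1 ≤ y * c := by
      have h5 : (x - y) * c = x * c - y * c := by ring
      have := heps k
      rw [← hc] at this
      rw [← hxk]
      linarith
    have hfl : ⌊y * c⌋ = K * 2 ^ e - 1 := by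
      rw [Int.floor_eq_iff]
      constructor
      · push_cast
        push_cast at hlow
        linarith
      · push_cast
        push_cast at hup
        linarith
    rw [hfl]
    have hz2 : (K * 2 ^ e) % 2 = 0 :=
      Int.emod_eq_zero_of_dvd (Dvd.dvd.mul_left (dvd_pow_self 2 (by omega)) K)
    omega

lemma mex_below_nonint {x : ℝ} (hx1 : 1 ≤ x) (hni : (⌊x⌋₊:ℝ) ≠ x) :
    ∃ δ : ℝ, 0 < δ ∧ ∀ y, x - δ < y → y < x → (0 ≤ y ∧ mex y = mex x) := by
  have hx0 : (0:ℝ) ≤ x := by linarith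
  have hflt : (⌊x⌋₊:ℝ) < x := lt_of_le_of_ne (Nat.floor_le hx0) hni
  have hfl1 : 1 ≤ ⌊x⌋₊ := Nat.floor_pos.mpr hx1
  refine ⟨x - ⌊x⌋₊, by linarith, fun y hy1 hy2 => ?_⟩
  have h1y : (⌊x⌋₊:ℝ) < y := by linarith
  have hy1' : 1 ≤ y := le_trans (by exact_mod_cast hfl1 : (1:ℝ) ≤ (⌊x⌋₊:ℝ)) h1y.le
  have hfl : ⌊y⌋₊ = ⌊x⌋₊ := (Nat.floor_eq_iff (by linarith)).mpr
    ⟨h1y.le, lt_trans hy2 (Nat.lt_floor_add_one x)⟩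
  exact ⟨by linarith, by rw [mex_of_one_le hy1', mex_of_one_le hx1, hfl]⟩

lemma mex_below_int {x : ℝ} {n : ℕ} (hn : (n:ℝ) = x) (h2 : 2 ≤ n)
    (hnp : n ≠ 2 ^ (Nat.log 2 n)) :
    ∃ δ : ℝ, 0 < δ ∧ ∀ y, x - δ < y → y < x → (0 ≤ y ∧ mex y = mex x) := by
  refine ⟨1, one_pos, fun y hy1 hy2 => ?_⟩
  have hycast : ((n - 1 : ℕ) : ℝ) = (n:ℝ) - 1 := by
    push_cast [Nat.cast_sub (by omega : 1 ≤ n)]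
    ring
  have h1y : ((n-1:ℕ):ℝ) ≤ y := by rw [hycast]; linarith
  have hy1' : 1 ≤ y := le_trans (by
    rw [hycast]
    have : (2:ℝ) ≤ (n:ℝ) := by exact_mod_cast h2
    linarith) h1y
  have hfly : ⌊y⌋₊ = n - 1 := (Nat.floor_eq_iff (by linarith)).mpr
    ⟨h1y, by rw [hycast]; push_cast; linarith⟩
  have hflx : ⌊x⌋₊ = n := by rw [← hn]; exact Nat.floor_natCast n
  have hlogn : Nat.log 2 (n-1) = Nat.log 2 n := by
    have hp1 : 2 ^ (Nat.log 2 n) ≤ n := Nat.pow_log_le_self 2 (by omega)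
    have hp2 : n < 2 ^ (Nat.log 2 n + 1) := Nat.lt_pow_succ_log_self (by norm_num) n
    exact Nat.log_eq_of_pow_le_of_lt_pow (by omega) (by omega)
  refine ⟨by linarith, ?_⟩
  rw [mex_of_one_le hy1', mex_of_one_le (by linarith : 1 ≤ x), hfly, hflx, hlogn]

/-- The main "from below" lemma at dyadic points. -/
lemma below_main {x : ℝ} {M : ℕ} (hx : 0 < x) (hM1 : rdigit x M = true)
    (hM2 : ∀ k, M < k → rdigit x k = false) :
    ∃ δ : ℝ, 0 < δ ∧ ∀ y, x - δ < y → y < x →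
      (∀ k, k < M → rdigit y k = rdigit x k) ∧
      (∀ k, M < k → k ≤ 2*M+1 → rdigit y k = true) := by
  have hx0 : (0:ℝ) ≤ x := hx.le
  set m := mex x with hm
  have hKr : (↑⌊x * 2 ^ ((M:ℤ) + 1 - m)⌋ : ℝ) = x * 2 ^ ((M:ℤ) + 1 - m) := tail_int hx0 hM2
  set K := ⌊x * 2 ^ ((M:ℤ) + 1 - m)⌋ with hKdef
  have hKodd : K % 2 = 1 := by
    rw [rdigit_of_nonneg hx0, ← hm] at hM1
    exact of_decide_eq_true hM1
  by_cases hlt1 : x < 1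
  · -- m = 0 case
    have hm0 : m = 0 := mex_of_lt_one hlt1
    refine ⟨min ((2:ℝ) ^ (m - 2*(M:ℤ) - 2)) x, lt_min (by positivity) hx,
      fun y hy1 hy2 => ?_⟩
    have hy0 : 0 < y := by
      have := min_le_right ((2:ℝ) ^ (m - 2*(M:ℤ) - 2)) x
      linarith
    have hmy : mex y = m := by rw [hm0]; exact mex_of_lt_one (lt_trans hy2 hlt1)
    obtain ⟨P1, P2⟩ := below_generic hKr.symm hKodd
      (by have := min_le_left ((2:ℝ) ^ (m - 2*(M:ℤ) - 2)) x; linarith) hy2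
    constructor
    · intro k hk
      rw [rdigit_of_nonneg hy0.le, rdigit_of_nonneg hx0, hmy, ← hm, P1 k hk]
    · intro k hk1 hk2
      rw [rdigit_of_nonneg hy0.le, hmy]
      exact decide_eq_true (P2 k hk1 hk2)
  · push_neg at hlt1
    have hm1 : 1 ≤ m := by
      rw [hm, mex_of_one_le hlt1]
      omega
    by_cases hpow : x = (2:ℝ) ^ (m - 1)
    · -- shift case: x is a power of two, M = 0
      have hM0 : M = 0 := by
        by_contra hcon
        have hMpos : 1 ≤ M := by omega
        have hfalse : rdigit x M = false := by
          rw [rdigit_of_nonneg hx0, ← hm]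
          have hxM : x * 2 ^ ((M:ℤ) + 1 - m) = ((2 ^ M : ℤ) : ℝ) := by
            rw [hpow, ← zpow_add₀ (two_ne_zero : (2:ℝ) ≠ 0)]
            have : (m - 1) + ((M:ℤ) + 1 - m) = (M:ℤ) := by ring
            rw [this]
            push_cast
            norm_num [zpow_natCast]
          rw [hxM, Int.floor_intCast]
          have hdvd : ((2:ℤ) ^ M) % 2 = 0 :=
            Int.emod_eq_zero_of_dvd (dvd_pow_self 2 (by omega))
          simp [hdvd]
        rw [hM1] at hfalse
        simp at hfalse
      subst hM0
      by_cases hmeq : m = 1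
      · -- x = 1
        have hx1 : x = 1 := by rw [hpow, hmeq]; norm_num
        refine ⟨1/4, by norm_num, fun y hy1 hy2 => ?_⟩
        rw [hx1] at hy1 hy2
        have hy0 : (0:ℝ) ≤ y := by linarith
        refine ⟨fun k hk => absurd hk (Nat.not_lt_zero k), fun k hk1 hk2 => ?_⟩
        have hk : k = 1 := by omega
        subst hk
        rw [rdigit_of_nonneg hy0, mex_of_lt_one (by linarith : y < 1)]
        have hexp2 : ((1:ℕ):ℤ) + 1 - 0 = 2 := by norm_num
        rw [hexp2]
        have hfl2 : ⌊y * 2 ^ (2:ℤ)⌋ = 3 := by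
          rw [Int.floor_eq_iff]
          constructor
          · push_cast
            nlinarith
          · push_cast
            nlinarith
        rw [hfl2]
        norm_num
      · -- x = 2^(m-1), m ≥ 2
        have hm2 : 2 ≤ m := by omega
        obtain ⟨a, haz⟩ : ∃ a : ℕ, (a:ℤ) = m - 1 := ⟨(m-1).toNat, Int.toNat_of_nonneg (by omega)⟩
        have ha1 : 1 ≤ a := by omega
        have hxa : x = ((2^a : ℕ) : ℝ) := by
          rw [hpow, ← haz]
          push_cast
          norm_num [zpow_natCast]
        refine ⟨1/2, by norm_num, fun y hy1 hy2 => ?_⟩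
        have h2a2 : (2:ℝ) ≤ ((2^a : ℕ) : ℝ) := by
          have : 2 ≤ 2^a := by
            calc 2 = 2^1 := by norm_num
            _ ≤ 2^a := Nat.pow_le_pow_right (by norm_num) ha1
          exact_mod_cast this
        rw [hxa] at hy1 hy2
        have hy1' : 1 < y := by linarith
        have hy0 : (0:ℝ) ≤ y := by linarith
        have hcast : ((2^a - 1 : ℕ) : ℝ) = ((2^a:ℕ):ℝ) - 1 := by
          push_cast [Nat.cast_sub (Nat.one_le_two_pow : 1 ≤ 2^a)]
          ring
        have hfly : ⌊y⌋₊ = 2^a - 1 := (Nat.floor_eq_iff hy0).mpr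
          ⟨by rw [hcast]; linarith, by rw [hcast]; linarith⟩
        have hlog : Nat.log 2 (2^a - 1) = a - 1 := by
          have hkey : (2:ℕ)^(a-1) * 2 = 2^a := by
            rw [← pow_succ]
            congr 1
            omega
          have hone : 1 ≤ (2:ℕ)^(a-1) := Nat.one_le_two_pow
          apply Nat.log_eq_of_pow_le_of_lt_pow
          · omega
          · have ha' : a - 1 + 1 = a := by omega
            rw [ha']
            omega
        have hmy : mex y = (a:ℤ) := by
          rw [mex_of_one_le hy1'.le, hfly, hlog]
          omega
        refine ⟨fun k hk => absurd hk (Nat.not_lt_zero k), fun k hk1 hk2 => ?_⟩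
        have hk : k = 1 := by omega
        subst hk
        rw [rdigit_of_nonneg hy0, hmy]
        have hexp : ((1:ℕ):ℤ) + 1 - (a:ℤ) = 2 - (a:ℤ) := by norm_num
        rw [hexp]
        have hpow2 : ((2^a:ℕ):ℝ) * 2 ^ ((2:ℤ) - (a:ℤ)) = 4 := by
          push_cast
          rw [← zpow_natCast (2:ℝ) a, ← zpow_add₀ (two_ne_zero : (2:ℝ) ≠ 0)]
          norm_num
        have hlow : (3:ℝ) ≤ y * 2 ^ ((2:ℤ) - (a:ℤ)) := by
          have hposc : (0:ℝ) < 2 ^ ((2:ℤ) - (a:ℤ)) := by positivity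
          have h1 : (((2^a:ℕ):ℝ) - 1/2) * 2 ^ ((2:ℤ) - (a:ℤ)) < y * 2 ^ ((2:ℤ) - (a:ℤ)) :=
            mul_lt_mul_of_pos_right (by linarith) hposc
          have h2 : (((2^a:ℕ):ℝ) - 1/2) * 2 ^ ((2:ℤ) - (a:ℤ))
              = 4 - (1/2) * 2 ^ ((2:ℤ) - (a:ℤ)) := by
            rw [sub_mul, hpow2]
          have h3 : (1/2:ℝ) * 2 ^ ((2:ℤ) - (a:ℤ)) ≤ 1 := by
            have : (2:ℝ) ^ ((2:ℤ) - (a:ℤ)) ≤ 2 ^ (1:ℤ) :=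
              zpow_le_zpow_right₀ one_le_two (by omega)
            rw [zpow_one] at this
            linarith
          linarith
        have hup : y * 2 ^ ((2:ℤ) - (a:ℤ)) < 4 := by
          rw [← hpow2]
          exact mul_lt_mul_of_pos_right hy2 (by positivity)
        have hfl3 : ⌊y * 2 ^ ((2:ℤ) - (a:ℤ))⌋ = 3 := by
          rw [Int.floor_eq_iff]
          constructor
          · exact_mod_cast hlow
          · push_cast; linarith
        rw [hfl3]
        norm_num
    · -- non-shift case, x ≥ 1
      have hstab : ∃ δ0 : ℝ, 0 < δ0 ∧ ∀ y, x - δ0 < y → y < x → (0 ≤ y ∧ mex y = mex x) := by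
        by_cases hni : (⌊x⌋₊:ℝ) = x
        · set n := ⌊x⌋₊ with hn
          have hn1 : 1 ≤ n := Nat.floor_pos.mpr hlt1
          have hlogeq : m = (Nat.log 2 n : ℤ) + 1 := by rw [hm, mex_of_one_le hlt1]
          have hn2 : 2 ≤ n := by
            rcases Nat.lt_or_ge n 2 with h | h
            · exfalso
              apply hpow
              have hne1 : n = 1 := by omega
              have hx1 : x = 1 := by rw [← hni, hne1]; norm_num
              have hmm : m = 1 := by rw [hlogeq, hne1]; simp
              rw [hx1, hmm]
              norm_num
            · exact h
          have hnp : n ≠ 2 ^ (Nat.log 2 n) := by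
            intro hcon
            apply hpow
            have h1 : (2:ℝ) ^ (m - 1) = ((2 ^ (Nat.log 2 n) : ℕ) : ℝ) := by
              rw [hlogeq]
              have h2 : (Nat.log 2 n : ℤ) + 1 - 1 = (Nat.log 2 n : ℤ) := by ring
              rw [h2]
              push_cast
              norm_num [zpow_natCast]
            rw [← hni, h1]
            exact_mod_cast hcon
          exact mex_below_int hni hn2 hnp
        · exact mex_below_nonint hlt1 hni
      obtain ⟨δ0, hδ0, hst⟩ := hstab
      refine ⟨min ((2:ℝ) ^ (m - 2*(M:ℤ) - 2)) δ0, lt_min (by positivity) hδ0,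
        fun y hy1 hy2 => ?_⟩
      obtain ⟨hy0, hmy⟩ := hst y
        (by have := min_le_right ((2:ℝ) ^ (m - 2*(M:ℤ) - 2)) δ0; linarith) hy2
      obtain ⟨P1, P2⟩ := below_generic hKr.symm hKodd
        (by have := min_le_left ((2:ℝ) ^ (m - 2*(M:ℤ) - 2)) δ0; linarith) hy2
      constructor
      · intro k hk
        rw [rdigit_of_nonneg hy0, rdigit_of_nonneg hx0, hmy, ← hm, P1 k hk]
      · intro k hk1 hk2
        rw [rdigit_of_nonneg hy0, hmy, ← hm]
        exact decide_eq_true (P2 k hk1 hk2)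

/-- If reals `r i` of VC dimension at most `d` converge to `r*`, then
`r*` has VC dimension at most `d`. -/
theorem vcdimR_le_of_tendsto (d : ℕ) (r : ℕ → ℝ) (rstar : ℝ)
    (hconv : Filter.Tendsto r Filter.atTop (nhds rstar))
    (hd : ∀ i : ℕ, VCdimR (r i) ≤ (d : ℕ∞)) : VCdimR rstar ≤ (d : ℕ∞) := by
  classical
  have hd' : ∀ i : ℕ, ∀ A : Finset ℕ, FamShatters (subFam (rdigit (r i))) A → A.card ≤ d :=
    fun i => (vcdim_le_iff _ d).mp (hd i)
  show vcDimF (subFam (rdigit rstar)) ≤ (d : ℕ∞)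
  rw [vcdim_le_iff]
  intro A hA
  set x := |rstar| with hxdef
  have hx0 : (0:ℝ) ≤ x := abs_nonneg rstar
  have hA' : FamShatters (subFam (rdigit x)) A := by
    rw [hxdef, rdigit_abs]
    exact hA
  rcases A.eq_empty_or_nonempty with rfl | hAne
  · simp
  obtain ⟨N, hN⟩ := exists_bound hA'
  have habs : Filter.Tendsto (fun i => |r i|) Filter.atTop (nhds x) := hconv.abs
  by_cases hinf : ∀ n : ℕ, ∃ j, n < j ∧ rdigit x j = true
  · obtain ⟨δL, hδL, hL⟩ := left_main x hx0 hinf N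
    obtain ⟨δR, hδR, hR⟩ := right_main x hx0 N
    obtain ⟨i0, hi0⟩ := Metric.tendsto_atTop.mp habs (min δL δR) (lt_min hδL hδR)
    have hdist := hi0 i0 (le_refl i0)
    rw [Real.dist_eq] at hdist
    have habs' := abs_lt.mp hdist
    have key : ∀ k, k < N → rdigit (|r i0|) k = rdigit x k := by
      rcases le_or_gt x (|r i0|) with hcase | hcase
      · intro k hk
        refine hR (|r i0|) hcase ?_ k hk
        have := min_le_right δL δR
        linarith
      · intro k hk
        refine hL (|r i0|) ?_ hcase.le k hk
        have := min_le_left δL δR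
        linarith
    have hsh := hN (rdigit (|r i0|)) key
    rw [rdigit_abs] at hsh
    exact hd' i0 A hsh
  · push_neg at hinf
    obtain ⟨n0, hn0⟩ := hinf
    have hn0' : ∀ j, n0 < j → rdigit x j = false := by
      intro j hj
      cases hb : rdigit x j
      · rfl
      · exact absurd hb (hn0 j hj)
    by_cases hall : ∀ j, rdigit x j = false
    · exfalso
      obtain ⟨a, ha⟩ := hAne
      obtain ⟨C, hC, htr⟩ := hA' A (Finset.Subset.refl A)
      obtain ⟨t, w, rfl⟩ := hC
      have hmem := (htr a ha).mpr ha
      simp only [Set.mem_setOf_eq] at hmem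
      rw [hall (t+a)] at hmem
      exact Bool.false_ne_true hmem.2
    · push_neg at hall
      obtain ⟨j0, hj0⟩ := hall
      have hj0' : rdigit x j0 = true := by
        cases hb : rdigit x j0
        · exact absurd hb hj0
        · rfl
      have hj0n0 : j0 ≤ n0 := by
        by_contra hc
        push_neg at hc
        rw [hn0' j0 hc] at hj0'
        exact Bool.false_ne_true hj0'
      set M := Nat.findGreatest (fun k => rdigit x k = true) n0 with hM
      have hM1 : rdigit x M = true := Nat.findGreatest_spec (P := fun k => rdigit x k = true) hj0n0 hj0'
      have hM2 : ∀ k, M < k → rdigit x k = false := by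
        intro k hk
        rcases Nat.lt_or_ge n0 k with h | h
        · exact hn0' k h
        · have hng := Nat.findGreatest_is_greatest (P := fun k => rdigit x k = true) hk h
          cases hb : rdigit x k
          · rfl
          · exact absurd hb hng
      have hxpos : 0 < x := by
        rcases lt_or_eq_of_le hx0 with h | h
        · exact h
        · exfalso
          have h0 : rdigit x M = false := by
            rw [rdigit_of_nonneg hx0, ← h]
            simp
          rw [hM1] at h0
          simp at h0
      obtain ⟨δB, hδB, hB⟩ := below_main hxpos hM1 hM2
      obtain ⟨δR, hδR, hR⟩ := right_main x hx0 N
      obtain ⟨i0, hi0⟩ := Metric.tendsto_atTop.mp habs (min δB δR) (lt_min hδB hδR)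
      have hdist := hi0 i0 (le_refl i0)
      rw [Real.dist_eq] at hdist
      have habs' := abs_lt.mp hdist
      rcases lt_or_ge (|r i0|) x with hcase | hcase
      · obtain ⟨P1, P2⟩ := hB (|r i0|)
          (by have := min_le_left δB δR; linarith) hcase
        obtain ⟨A', hcard, hshE⟩ := transfer (rdigit x) (rdigit (|r i0|)) M
          (fun k hk => P1 k hk) hM2 (fun k hk1 hk2 => P2 k hk1 hk2) A hAne hA'
        rw [rdigit_abs] at hshE
        have hle := hd' i0 A' hshE
        rw [← hcard]
        exact hle
      · have key : ∀ k, k < N → rdigit (|r i0|) k = rdigit x k := by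
          intro k hk
          refine hR (|r i0|) hcase ?_ k hk
          have := min_le_right δB δR
          linarith
        have hsh := hN (rdigit (|r i0|)) key
        rw [rdigit_abs] at hsh
        exact hd' i0 A hsh
end

section
/- An infinite binary string S has VC dimension 1 if and only if it is of one of the forms 0^a 1 0^*, 1^a 0^* (a ≥ 1, possibly a infinite), or 0^a (1 0^b)^c 1 0^* with 0 ≤ a ≤ b, b ≥ 1, c ≥ 1 (possibly c infinite). -/
def GoodCond (S : ℕ → Bool) : Prop :=
  (∃ n, S n = true) ∧
    ∀ d, 1 ≤ d → (∃ p, S p = true ∧ S (p + d) = true) →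
      ∀ q, S (q + d) = true → S q = true

lemma shatters_mono {F : Set (Set ℕ)} {A A' : Finset ℕ}
    (h : FamShatters F A) (hsub : A' ⊆ A) : FamShatters F A' := by
  intro B hB
  obtain ⟨C, hC, hCB⟩ := h B (hB.trans hsub)
  exact ⟨C, hC, fun i hi => hCB i (hsub hi)⟩

lemma down_aux {P : ℕ → Prop} (h : ∀ j, P (j+1) → P j) (k : ℕ) :
    ∀ n, P (k + n) → P k := by
  intro n
  induction n with
  | zero => intro hp; exact hp
  | succ m ih => intro hp; exact ih (h _ hp)

lemma down {P : ℕ → Prop} (h : ∀ j, P (j+1) → P j) {k j : ℕ}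
    (hkj : k ≤ j) (hj : P j) : P k := by
  obtain ⟨n, rfl⟩ := Nat.exists_eq_add_of_le hkj
  exact down_aux h k n hj

lemma singleton_shatters {S : ℕ → Bool} {n : ℕ} (hn : S n = true) :
    FamShatters (subFam S) {0} := by
  intro B hB
  by_cases h0 : 0 ∈ B
  · refine ⟨{i | i < 1 ∧ S (n + i) = true}, ⟨n, 1, rfl⟩, ?_⟩
    intro i hi
    simp only [Finset.mem_singleton] at hi
    subst hi
    simp [Set.mem_setOf_eq, hn, h0]
  · refine ⟨{i | i < 0 ∧ S (0 + i) = true}, ⟨0, 0, rfl⟩, ?_⟩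
    intro i hi
    simp only [Finset.mem_singleton] at hi
    subst hi
    simp [Set.mem_setOf_eq, h0]

lemma pair_shatters {S : ℕ → Bool} {d p q : ℕ} (hd : 1 ≤ d)
    (hp : S p = true) (hpd : S (p + d) = true)
    (hq : S q = false) (hqd : S (q + d) = true) :
    FamShatters (subFam S) {0, d} := by
  intro B hB
  by_cases h0 : 0 ∈ B <;> by_cases hd' : d ∈ B
  · refine ⟨{i | i < d + 1 ∧ S (p + i) = true}, ⟨p, d + 1, rfl⟩, ?_⟩
    intro i hi
    simp only [Finset.mem_insert, Finset.mem_singleton] at hi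
    rcases hi with rfl | rfl
    · simp [Set.mem_setOf_eq, hp, h0]
    · simp [Set.mem_setOf_eq, hpd, hd']
  · refine ⟨{i | i < 1 ∧ S (p + i) = true}, ⟨p, 1, rfl⟩, ?_⟩
    intro i hi
    simp only [Finset.mem_insert, Finset.mem_singleton] at hi
    rcases hi with rfl | rfl
    · simp [Set.mem_setOf_eq, hp, h0]
    · simp only [Set.mem_setOf_eq]
      constructor
      · rintro ⟨h1, -⟩; omega
      · intro h; exact absurd h hd'
  · refine ⟨{i | i < d + 1 ∧ S (q + i) = true}, ⟨q, d + 1, rfl⟩, ?_⟩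
    intro i hi
    simp only [Finset.mem_insert, Finset.mem_singleton] at hi
    rcases hi with rfl | rfl
    · simp [Set.mem_setOf_eq, hq, h0]
    · simp [Set.mem_setOf_eq, hqd, hd']
  · refine ⟨{i | i < 0 ∧ S (0 + i) = true}, ⟨0, 0, rfl⟩, ?_⟩
    intro i hi
    simp only [Finset.mem_insert, Finset.mem_singleton] at hi
    rcases hi with rfl | rfl
    · simp [Set.mem_setOf_eq, h0]
    · simp [Set.mem_setOf_eq, hd']

lemma shatter_extract {S : ℕ → Bool} {i j : ℕ} (hij : i < j)
    (h : FamShatters (subFam S) {i, j}) :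
    (∃ p, S p = true ∧ S (p + (j - i)) = true) ∧
      (∃ q, S q = false ∧ S (q + (j - i)) = true) := by
  obtain ⟨C, ⟨t, w, rfl⟩, hC⟩ := h {i, j} (Finset.Subset.refl _)
  have hiC : i < w ∧ S (t + i) = true := by
    have := (hC i (by simp)).mpr (by simp)
    simpa [Set.mem_setOf_eq] using this
  have hjC : j < w ∧ S (t + j) = true := by
    have := (hC j (by simp)).mpr (by simp)
    simpa [Set.mem_setOf_eq] using this
  obtain ⟨C', ⟨t', w', rfl⟩, hC'⟩ := h {j} (by simp)
  have hjC' : j < w' ∧ S (t' + j) = true := by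
    have := (hC' j (by simp)).mpr (by simp)
    simpa [Set.mem_setOf_eq] using this
  have hiC' : ¬ (i < w' ∧ S (t' + i) = true) := by
    intro hmem
    have := (hC' i (by simp)).mp hmem
    simp only [Finset.mem_singleton] at this
    omega
  have hSi : S (t' + i) = false := by
    cases hsi : S (t' + i)
    · rfl
    · exact absurd ⟨lt_trans hij hjC'.1, hsi⟩ hiC'
  refine ⟨⟨t + i, hiC.2, ?_⟩, ⟨t' + i, hSi, ?_⟩⟩
  · have e : t + i + (j - i) = t + j := by omega
    rw [e]; exact hjC.2
  · have e : t' + i + (j - i) = t' + j := by omega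
    rw [e]; exact hjC'.2

lemma vc_iff (S : ℕ → Bool) : VCdim S = 1 ↔ GoodCond S := by
  constructor
  · intro h
    constructor
    · by_contra hno
      push_neg at hno
      have hb : ∀ x ∈ {n : ℕ∞ | ∃ A : Finset ℕ, FamShatters (subFam S) A ∧ (A.card : ℕ∞) = n},
          x ≤ 0 := by
        rintro x ⟨A, hA, rfl⟩
        have hAe : A = ∅ := by
          by_contra hA0
          obtain ⟨i, hi⟩ := Finset.nonempty_iff_ne_empty.mpr hA0
          obtain ⟨C, ⟨t, w, rfl⟩, hC⟩ := hA A (Finset.Subset.refl _)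
          have := (hC i hi).mpr hi
          simp only [Set.mem_setOf_eq] at this
          exact hno (t + i) this.2
        simp [hAe]
      have h1 : (1 : ℕ∞) ≤ 0 := by
        rw [← h]
        exact sSup_le hb
      simp at h1
    · intro d hd hP1 q hq
      by_contra hqf
      have hqf' : S q = false := by
        cases hS : S q
        · rfl
        · exact absurd hS hqf
      obtain ⟨p, hp, hpd⟩ := hP1
      have hsh := pair_shatters hd hp hpd hqf' hq
      have h2 : (2 : ℕ∞) ≤ VCdim S := by
        apply le_sSup
        refine ⟨{0, d}, hsh, ?_⟩
        rw [Finset.card_pair (by omega : (0 : ℕ) ≠ d)]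
        rfl
      rw [h] at h2
      norm_num at h2
  · rintro ⟨⟨n, hn⟩, h2⟩
    apply le_antisymm
    · apply sSup_le
      rintro x ⟨A, hA, rfl⟩
      have hcard : A.card ≤ 1 := by
        by_contra hc
        push_neg at hc
        obtain ⟨i, hi, j, hj, hij⟩ := Finset.one_lt_card.mp hc
        set i' := min i j with hi'
        set j' := max i j with hj'
        have hlt : i' < j' := by
          rcases lt_or_gt_of_ne hij with hl | hl <;> omega
        have hsub : ({i', j'} : Finset ℕ) ⊆ A := by
          intro x hx
          simp only [Finset.mem_insert, Finset.mem_singleton] at hx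
          rcases hx with rfl | rfl
          · rcases le_total i j with hle | hle
            · simpa [hi', min_eq_left hle] using hi
            · simpa [hi', min_eq_right hle] using hj
          · rcases le_total i j with hle | hle
            · simpa [hj', max_eq_right hle] using hj
            · simpa [hj', max_eq_left hle] using hi
        obtain ⟨⟨p, hp, hpd⟩, ⟨qq, hq0, hqd⟩⟩ :=
          shatter_extract hlt (shatters_mono hA hsub)
        have := h2 (j' - i') (by omega) ⟨p, hp, hpd⟩ qq hqd
        rw [this] at hq0
        exact Bool.noConfusion hq0
      exact_mod_cast hcard
    · apply le_sSup
      exact ⟨{0}, singleton_shatters hn, by simp⟩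

lemma forms_iff (S : ℕ → Bool) : GoodCond S ↔
      ((∃ a : ℕ, 1 ≤ a ∧ ∀ n : ℕ, S n = true ↔ n = a) ∨
        ((∀ n : ℕ, S n = true) ∨ ∃ a : ℕ, 1 ≤ a ∧ ∀ n : ℕ, S n = true ↔ n < a) ∨
        (∃ a b : ℕ, a ≤ b ∧ 1 ≤ b ∧
          ((∃ c : ℕ, 1 ≤ c ∧ ∀ n : ℕ, S n = true ↔ ∃ j ≤ c, n = a + j * (b + 1)) ∨
            (∀ n : ℕ, S n = true ↔ ∃ j : ℕ, n = a + j * (b + 1))))) := by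
  constructor
  · rintro ⟨⟨n₀, hn₀⟩, h2⟩
    by_cases hadj : ∃ p, S p = true ∧ S (p + 1) = true
    · -- ones downward closed
      have hdc : ∀ q, S (q + 1) = true → S q = true := h2 1 le_rfl hadj
      by_cases hall : ∀ n, S n = true
      · exact Or.inr (Or.inl (Or.inl hall))
      · push_neg at hall
        have hex : ∃ n, ¬ (S n = true) := by
          obtain ⟨n, hn⟩ := hall
          exact ⟨n, hn⟩
        have hna : ¬ (S (Nat.find hex) = true) := Nat.find_spec hex
        have hlt : ∀ m < Nat.find hex, S m = true := by
          intro m hm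
          have := Nat.find_min hex hm
          simpa using this
        have hS0 : S 0 = true := down (P := fun n => S n = true) hdc (Nat.zero_le n₀) hn₀
        refine Or.inr (Or.inl (Or.inr ⟨Nat.find hex, ?_, ?_⟩))
        · rcases Nat.eq_zero_or_pos (Nat.find hex) with h0 | h1
          · rw [h0] at hna; exact absurd hS0 hna
          · exact h1
        · intro m
          constructor
          · intro hm
            by_contra hge
            push_neg at hge
            exact hna (down (P := fun n => S n = true) hdc hge hm)
          · exact hlt m
    · -- no adjacent ones
      have ha := Nat.find_spec (⟨n₀, hn₀⟩ : ∃ n, S n = true)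
      set a := Nat.find (⟨n₀, hn₀⟩ : ∃ n, S n = true) with haa
      have hmin : ∀ m < a, ¬ (S m = true) := fun m hm => Nat.find_min _ hm
      by_cases hone : ∃ e, S (a + 1 + e) = true
      · set k := Nat.find hone with hkk
        have hSk : S (a + 1 + k) = true := Nat.find_spec hone
        have hkmin : ∀ e < k, ¬ (S (a + 1 + e) = true) := fun e he => Nat.find_min hone he
        have hSd0 : S (a + (k + 1)) = true := by
          have e : a + (k + 1) = a + 1 + k := by omega
          rw [e]; exact hSk
        have hb1 : 1 ≤ k := by
          by_contra hk0
          push_neg at hk0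
          interval_cases k
          exact hadj ⟨a, ha, by simpa using hSk⟩
        have H : ∀ q, S (q + (k + 1)) = true → S q = true :=
          h2 (k + 1) (by omega) ⟨a, ha, hSd0⟩
        have hab : a ≤ k := by
          by_contra hgt
          push_neg at hgt
          have hq : S (a - (k + 1)) = true := by
            apply H
            have e : a - (k + 1) + (k + 1) = a := by omega
            rw [e]; exact ha
          exact hmin _ (by omega) hq
        have key : ∀ r, S r = true → ∃ j, r = a + j * (k + 1) := by
          intro r
          induction r using Nat.strong_induction_on with
          | _ r ih =>
            intro hr
            by_cases hc : a + (k + 1) ≤ r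
            · have hq : S (r - (k + 1)) = true := by
                apply H
                have e : r - (k + 1) + (k + 1) = r := by omega
                rw [e]; exact hr
              obtain ⟨j, hj⟩ := ih (r - (k + 1)) (by omega) hq
              refine ⟨j + 1, ?_⟩
              have e : (j + 1) * (k + 1) = j * (k + 1) + (k + 1) := by ring
              omega
            · push_neg at hc
              have hra : a ≤ r := by
                by_contra h'
                push_neg at h'
                exact hmin r h' hr
              have hreq : r = a := by
                by_contra hne
                have h1 : a + 1 ≤ r := by omega
                have : S (a + 1 + (r - (a + 1))) = true := by
                  have e : a + 1 + (r - (a + 1)) = r := by omega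
                  rw [e]; exact hr
                exact hkmin (r - (a + 1)) (by omega) this
              exact ⟨0, by omega⟩
        have step : ∀ j, S (a + (j + 1) * (k + 1)) = true → S (a + j * (k + 1)) = true := by
          intro j hj
          apply H
          have e : a + j * (k + 1) + (k + 1) = a + (j + 1) * (k + 1) := by ring
          rw [e]; exact hj
        have jdc : ∀ {j j' : ℕ}, j' ≤ j → S (a + j * (k + 1)) = true →
            S (a + j' * (k + 1)) = true := by
          intro j j' hle hj
          exact down (P := fun j => S (a + j * (k + 1)) = true) step hle hj
        by_cases hfin : ∃ j, ¬ (S (a + j * (k + 1)) = true)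
        · set e := Nat.find hfin with hee
          have hne : ¬ (S (a + e * (k + 1)) = true) := Nat.find_spec hfin
          have hemin : ∀ j < e, S (a + j * (k + 1)) = true := by
            intro j hj
            have := Nat.find_min hfin hj
            simpa using this
          have he2 : 2 ≤ e := by
            by_contra he1
            push_neg at he1
            interval_cases e
            · exact hne (by simpa using ha)
            · exact hne (by simpa using hSd0)
          refine Or.inr (Or.inr ⟨a, k, hab, hb1, Or.inl ⟨e - 1, by omega, ?_⟩⟩)
          intro m
          constructor
          · intro hm
            obtain ⟨j, hj⟩ := key m hm
            refine ⟨j, ?_, hj⟩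
            by_contra hjc
            push_neg at hjc
            have : S (a + e * (k + 1)) = true := by
              apply jdc (by omega : e ≤ j)
              rw [← hj]; exact hm
            exact hne this
          · rintro ⟨j, hjc, rfl⟩
            exact hemin j (by omega)
        · push_neg at hfin
          refine Or.inr (Or.inr ⟨a, k, hab, hb1, Or.inr ?_⟩)
          intro m
          constructor
          · exact key m
          · rintro ⟨j, rfl⟩
            exact hfin j
      · push_neg at hone
        have huniq : ∀ m, S m = true ↔ m = a := by
          intro m
          constructor
          · intro hm
            by_contra hne
            rcases lt_or_gt_of_ne hne with hl | hl
            · exact hmin m hl hm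
            · have h1 : a + 1 ≤ m := by omega
              apply hone (m - (a + 1))
              have e : a + 1 + (m - (a + 1)) = m := by omega
              rw [e]; exact hm
          · rintro rfl; exact ha
        rcases Nat.eq_zero_or_pos a with h0 | h1
        · refine Or.inr (Or.inl (Or.inr ⟨1, le_rfl, ?_⟩))
          intro m
          rw [huniq m, h0]
          omega
        · exact Or.inl ⟨a, h1, huniq⟩
  · -- forms imply GoodCond
    rintro (⟨a, ha, hiff⟩ | hall | ⟨a, b, hab, hb, hform⟩)
    · constructor
      · exact ⟨a, (hiff a).mpr rfl⟩
      · rintro d hd ⟨p, hp, hpd⟩ q hq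
        have e1 := (hiff p).mp hp
        have e2 := (hiff (p + d)).mp hpd
        omega
    · rcases hall with hall | ⟨a, ha1, hiff⟩
      · exact ⟨⟨0, hall 0⟩, fun d _ _ q _ => hall q⟩
      · constructor
        · exact ⟨0, (hiff 0).mpr (by omega)⟩
        · rintro d hd - q hq
          have := (hiff (q + d)).mp hq
          exact (hiff q).mpr (by omega)
    · rcases hform with ⟨c, hc, hiff⟩ | hiff
      · constructor
        · exact ⟨a, (hiff a).mpr ⟨0, by omega, by ring⟩⟩
        · rintro d hd ⟨p, hp, hpd⟩ q hq
          obtain ⟨j1, hj1c, hj1⟩ := (hiff p).mp hp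
          obtain ⟨j2, hj2c, hj2⟩ := (hiff (p + d)).mp hpd
          obtain ⟨j3, hj3c, hj3⟩ := (hiff (q + d)).mp hq
          have hj12 : j1 < j2 := by
            rcases le_or_gt j2 j1 with hle | hl
            · have := Nat.mul_le_mul_right (b + 1) hle
              omega
            · exact hl
          obtain ⟨t, rfl⟩ : ∃ t, j2 = j1 + (t + 1) := ⟨j2 - j1 - 1, by omega⟩
          have hdval : d = (t + 1) * (b + 1) := by
            have e : (j1 + (t + 1)) * (b + 1) = j1 * (b + 1) + (t + 1) * (b + 1) := by ring
            omega
          have hj3k : t + 1 ≤ j3 := by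
            by_contra hlt
            push_neg at hlt
            have hle : j3 ≤ t := by omega
            have h5 : j3 * (b + 1) ≤ t * (b + 1) := Nat.mul_le_mul_right (b + 1) hle
            have e : (t + 1) * (b + 1) = t * (b + 1) + (b + 1) := by ring
            omega
          obtain ⟨j', rfl⟩ : ∃ j', j3 = j' + (t + 1) := ⟨j3 - (t + 1), by omega⟩
          apply (hiff q).mpr
          refine ⟨j', by omega, ?_⟩
          have e : (j' + (t + 1)) * (b + 1) = j' * (b + 1) + (t + 1) * (b + 1) := by ring
          omega
      · constructor
        · exact ⟨a, (hiff a).mpr ⟨0, by ring⟩⟩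
        · rintro d hd ⟨p, hp, hpd⟩ q hq
          obtain ⟨j1, hj1⟩ := (hiff p).mp hp
          obtain ⟨j2, hj2⟩ := (hiff (p + d)).mp hpd
          obtain ⟨j3, hj3⟩ := (hiff (q + d)).mp hq
          have hj12 : j1 < j2 := by
            rcases le_or_gt j2 j1 with hle | hl
            · have := Nat.mul_le_mul_right (b + 1) hle
              omega
            · exact hl
          obtain ⟨t, rfl⟩ : ∃ t, j2 = j1 + (t + 1) := ⟨j2 - j1 - 1, by omega⟩
          have hdval : d = (t + 1) * (b + 1) := by
            have e : (j1 + (t + 1)) * (b + 1) = j1 * (b + 1) + (t + 1) * (b + 1) := by ring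
            omega
          have hj3k : t + 1 ≤ j3 := by
            by_contra hlt
            push_neg at hlt
            have hle : j3 ≤ t := by omega
            have h5 : j3 * (b + 1) ≤ t * (b + 1) := Nat.mul_le_mul_right (b + 1) hle
            have e : (t + 1) * (b + 1) = t * (b + 1) + (b + 1) := by ring
            omega
          obtain ⟨j', rfl⟩ : ∃ j', j3 = j' + (t + 1) := ⟨j3 - (t + 1), by omega⟩
          apply (hiff q).mpr
          refine ⟨j', ?_⟩
          have e : (j' + (t + 1)) * (b + 1) = j' * (b + 1) + (t + 1) * (b + 1) := by ring
          omega


/-- An infinite binary string has VC dimension 1 iff it is of one of the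
forms `0^a 1 0^*` (`a ≥ 1`), `1^a 0^*` (`a ≥ 1`, possibly infinite), or
`0^a (1 0^b)^c 1 0^*` (`0 ≤ a ≤ b`, `b ≥ 1`, `c ≥ 1`, possibly `c` infinite). -/
theorem vcdim_eq_one_iff (S : ℕ → Bool) :
    VCdim S = 1 ↔
      ((∃ a : ℕ, 1 ≤ a ∧ ∀ n : ℕ, S n = true ↔ n = a) ∨
        ((∀ n : ℕ, S n = true) ∨ ∃ a : ℕ, 1 ≤ a ∧ ∀ n : ℕ, S n = true ↔ n < a) ∨
        (∃ a b : ℕ, a ≤ b ∧ 1 ≤ b ∧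
          ((∃ c : ℕ, 1 ≤ c ∧ ∀ n : ℕ, S n = true ↔ ∃ j ≤ c, n = a + j * (b + 1)) ∨
            (∀ n : ℕ, S n = true ↔ ∃ j : ℕ, n = a + j * (b + 1))))) := (vc_iff S).trans (forms_iff S)
end

section
/- If S is a binary string, then VCdim(S) ≤ 2·alt(S), where alt(S) is the number of maximal contiguous blocks of 1's in S. -/
/-- The number of maximal contiguous blocks of 1's in `S` (as an extended natural),
counted via their starting indices. -/
noncomputable def altCount (S : ℕ → Bool) : ℕ∞ :=
  {n : ℕ | S n = true ∧ (n = 0 ∨ S (n - 1) = false)}.encard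

lemma exists_blockStart (S : ℕ → Bool) :
    ∀ b, S b = true →
      ∃ n, (S n = true ∧ (n = 0 ∨ S (n - 1) = false)) ∧ n ≤ b ∧
        ∀ i, n ≤ i → i ≤ b → S i = true := by
  intro b
  induction b with
  | zero =>
    intro h
    exact ⟨0, ⟨h, Or.inl rfl⟩, le_refl 0, fun i h1 h2 => by
      have : i = 0 := Nat.le_antisymm h2 h1
      simpa [this] using h⟩
  | succ b ih =>
    intro h
    by_cases hb : S b = true
    · obtain ⟨n, hn1, hn2, hn3⟩ := ih hb
      refine ⟨n, hn1, Nat.le_succ_of_le hn2, fun i h1 h2 => ?_⟩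
      rcases Nat.lt_or_ge i (b+1) with h' | h'
      · exact hn3 i h1 (Nat.lt_succ_iff.mp h')
      · have : i = b + 1 := Nat.le_antisymm h2 h'
        simpa [this] using h
    · refine ⟨b+1, ⟨h, Or.inr ?_⟩, le_refl _, fun i h1 h2 => ?_⟩
      · simp only [Nat.add_sub_cancel]
        exact Bool.eq_false_iff.mpr hb
      · have : i = b + 1 := Nat.le_antisymm h2 h1
        simpa [this] using h

/-- `VCdim S ≤ 2 · alt S`. -/
theorem vcdim_le_two_mul_alt (S : ℕ → Bool) : VCdim S ≤ 2 * altCount S := by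
  apply sSup_le
  rintro n ⟨A, hA, rfl⟩
  set d := A.card with hd
  rcases Nat.eq_zero_or_pos d with hd0 | hd0
  · simp [hd0]
  set c := (d + 1) / 2 with hc
  have hcd : ∀ j : Fin c, 2 * j.1 < d := fun j => by
    have := j.2; omega
  set e : Fin d → ℕ := fun i => A.orderEmbOfFin rfl i with he
  have hmono : StrictMono e := (A.orderEmbOfFin rfl).strictMono
  have hmemA : ∀ i : Fin d, e i ∈ A := fun i => A.orderEmbOfFin_mem rfl i
  set idx : Fin c → Fin d := fun j => ⟨2 * j.1, hcd j⟩ with hidx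
  set B : Finset ℕ := Finset.image (fun j : Fin c => e (idx j)) Finset.univ with hB
  have hBsub : B ⊆ A := by
    intro x hx
    simp only [hB, Finset.mem_image] at hx
    obtain ⟨j, _, rfl⟩ := hx
    exact hmemA _
  obtain ⟨C, hC, hiff⟩ := hA B hBsub
  obtain ⟨t, w, rfl⟩ := hC
  have hiff' : ∀ i : Fin d, (e i < w ∧ S (t + e i) = true) ↔ e i ∈ B := by
    intro i
    have := hiff (e i) (hmemA i)
    simpa [Set.mem_setOf_eq] using this
  have heB : ∀ i : Fin d, (e i ∈ B ↔ Even i.1) := by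
    intro i
    constructor
    · intro hx
      simp only [hB, Finset.mem_image, Finset.mem_univ, true_and] at hx
      obtain ⟨j, hj⟩ := hx
      have hji : idx j = i := hmono.injective hj
      have : i.1 = 2 * j.1 := by rw [← hji]
      exact ⟨j.1, by omega⟩
    · rintro ⟨m, hm⟩
      have hid : i.1 < d := i.2
      have hmc : m < c := by omega
      have : i = idx ⟨m, hmc⟩ := by
        apply Fin.ext
        simp [hidx]; omega
      rw [this]
      simp only [hB, Finset.mem_image]
      exact ⟨⟨m, hmc⟩, Finset.mem_univ _, rfl⟩
  -- even positions are in C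
  have hEven : ∀ j : Fin c, e (idx j) < w ∧ S (t + e (idx j)) = true := by
    intro j
    apply (hiff' (idx j)).mpr
    apply (heB (idx j)).mpr
    exact ⟨j.1, by simp [hidx]; omega⟩
  -- odd positions just below an even position are false
  have hOdd : ∀ j : Fin c, ∀ hj : 2 * j.1 - 1 < d, j.1 ≠ 0 →
      S (t + e ⟨2 * j.1 - 1, hj⟩) = false := by
    intro j hj hj0
    have hodd : ¬ Even ((⟨2 * j.1 - 1, hj⟩ : Fin d) : ℕ) := by
      simp only []
      intro ⟨m, hm⟩
      omega
    have hnB : e ⟨2 * j.1 - 1, hj⟩ ∉ B := fun hx => hodd ((heB _).mp hx)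
    have hlt : e ⟨2 * j.1 - 1, hj⟩ < w := by
      have h1 : (⟨2 * j.1 - 1, hj⟩ : Fin d) < idx j := by
        apply Fin.mk_lt_mk.mpr
        omega
      exact lt_of_lt_of_le (hmono h1) (le_of_lt (hEven j).1)
    by_contra hf
    have hT : S (t + e ⟨2 * j.1 - 1, hj⟩) = true := by
      cases h : S (t + e ⟨2 * j.1 - 1, hj⟩) with
      | false => exact absurd h hf
      | true => rfl
    exact hnB ((hiff' _).mp ⟨hlt, hT⟩)
  -- choose block starts
  have hEx : ∀ j : Fin c, ∃ m, (S m = true ∧ (m = 0 ∨ S (m - 1) = false)) ∧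
      m ≤ t + e (idx j) ∧ ∀ i, m ≤ i → i ≤ t + e (idx j) → S i = true :=
    fun j => exists_blockStart S _ (hEven j).2
  choose f hf1 hf2 hf3 using hEx
  have hfmono : StrictMono f := by
    intro j j' hjj
    have hj'0 : j'.1 ≠ 0 := by
      have := hjj
      simp only [Fin.lt_def] at this
      omega
    have hji : 2 * j'.1 - 1 < d := by have := hcd j'; omega
    have hfalse := hOdd j' hji hj'0
    have hkey : t + e ⟨2 * j'.1 - 1, hji⟩ < f j' := by
      by_contra hle
      push_neg at hle
      have hle2 : t + e ⟨2 * j'.1 - 1, hji⟩ ≤ t + e (idx j') := by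
        have : (⟨2 * j'.1 - 1, hji⟩ : Fin d) < idx j' := by
          apply Fin.mk_lt_mk.mpr; omega
        exact Nat.add_le_add_left (le_of_lt (hmono this)) t
      have := hf3 j' _ hle hle2
      rw [hfalse] at this
      exact absurd this (by simp)
    have hle3 : e (idx j) ≤ e ⟨2 * j'.1 - 1, hji⟩ := by
      apply hmono.monotone
      apply Fin.mk_le_mk.mpr
      have := Fin.lt_def.mp hjj
      simp only [hidx] at *
      omega
    calc f j ≤ t + e (idx j) := hf2 j
      _ ≤ t + e ⟨2 * j'.1 - 1, hji⟩ := Nat.add_le_add_left hle3 t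
      _ < f j' := hkey
  -- count
  have hrange : Set.range f ⊆ {m : ℕ | S m = true ∧ (m = 0 ∨ S (m - 1) = false)} := by
    rintro x ⟨j, rfl⟩
    exact hf1 j
  have hcard : (Set.range f).encard = (c : ℕ∞) := by
    rw [← Set.image_univ, ← Finset.coe_univ, ← Finset.coe_image,
      Set.encard_coe_eq_coe_finsetCard,
      Finset.card_image_of_injective _ hfmono.injective, Finset.card_univ,
      Fintype.card_fin]
  have hcle : (c : ℕ∞) ≤ altCount S := by
    rw [← hcard]
    exact Set.encard_mono hrange
  have hdc : d ≤ 2 * c := by omega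
  calc (d : ℕ∞) ≤ ((2 * c : ℕ) : ℕ∞) := by exact_mod_cast hdc
    _ = 2 * (c : ℕ∞) := by push_cast; ring
    _ ≤ 2 * altCount S := mul_le_mul_right hcle 2
end

section
/- Let S be a binary string and let S^{[p]} (p > 1 an integer) be obtained by replacing each symbol c of S with 0^{p−1}c. Then VCdim(S^{[p]}) = VCdim(S). -/
/-- The string `S^{[p]}` obtained from `S` by replacing each symbol `c` with `0^{p-1} c`. -/
def dilute (S : ℕ → Bool) (p : ℕ) : ℕ → Bool :=
  fun n => if n % p = p - 1 then S (n / p) else false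

lemma dilute_eval (S : ℕ → Bool) {p : ℕ} (hp : 0 < p) (q : ℕ) :
    dilute S p (p * q + (p - 1)) = S q := by
  unfold dilute
  have h1 : (p * q + (p - 1)) % p = p - 1 := by
    rw [Nat.mul_add_mod]; exact Nat.mod_eq_of_lt (by omega)
  have h2 : (p * q + (p - 1)) / p = q := by
    rw [Nat.mul_add_div hp, Nat.div_eq_of_lt (by omega)]; rfl
  rw [h1, h2, if_pos rfl]

lemma mul_window {p : ℕ} (hp : 0 < p) (i w : ℕ) :
    p * i + (p - 1) < p * w ↔ i < w := by
  have hx : p - 1 + 1 = p := by omega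
  constructor
  · intro h
    by_contra h'
    push_neg at h'
    have h2 : p * w ≤ p * i := Nat.mul_le_mul (le_refl p) h'
    linarith
  · intro h
    have h2 : p * (i + 1) ≤ p * w := Nat.mul_le_mul (le_refl p) h
    have h3 : p * (i + 1) = p * i + p := by ring
    linarith

lemma window_div {p : ℕ} (hp : 0 < p) (r q w : ℕ) :
    (q < (if w ≤ r then 0 else (w - r + p - 1) / p)) ↔ p * q + r < w := by
  split
  case isTrue h =>
    exact iff_of_false (Nat.not_lt_zero q)
      (Nat.not_lt.mpr (le_trans h (Nat.le_add_left r (p * q))))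
  case isFalse h =>
    push_neg at h
    have hx : w - r + p - 1 = (w - r - 1) + p := by omega
    rw [hx, Nat.add_div_right _ hp, Nat.lt_succ_iff, Nat.le_div_iff_mul_le hp]
    have hmul : q * p = p * q := Nat.mul_comm q p
    have hy : w - r - 1 + r + 1 = w := by omega
    constructor <;> intro h' <;> linarith

lemma shatter_forward (S : ℕ → Bool) {p : ℕ} (hp : 1 < p) {A : Finset ℕ}
    (hA : FamShatters (subFam S) A) :
    FamShatters (subFam (dilute S p)) (A.image (fun i => p * i + (p - 1))) := by
  have hp0 : 0 < p := by omega
  intro B' hB'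
  obtain ⟨C, ⟨t, w, rfl⟩, hC⟩ :=
    hA (A.filter (fun i => p * i + (p - 1) ∈ B')) (Finset.filter_subset _ _)
  refine ⟨_, ⟨p * t, p * w, rfl⟩, ?_⟩
  intro j hj
  obtain ⟨i, hiA, rfl⟩ := Finset.mem_image.mp hj
  have hCi := hC i hiA
  simp only [Set.mem_setOf_eq, Finset.mem_filter] at hCi ⊢
  rw [show p * t + (p * i + (p - 1)) = p * (t + i) + (p - 1) by ring,
    dilute_eval S hp0 (t + i), mul_window hp0]
  rw [hCi]
  simp [hiA]

lemma shatter_backward (S : ℕ → Bool) {p : ℕ} (hp : 1 < p) {A : Finset ℕ}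
    (hA : FamShatters (subFam (dilute S p)) A) :
    ∃ A' : Finset ℕ, A'.card = A.card ∧ FamShatters (subFam S) A' := by
  have hp0 : 0 < p := by omega
  obtain ⟨C₀, ⟨t₀, w₀, rfl⟩, hC₀⟩ := hA A (Finset.Subset.refl A)
  have hmod : ∀ i ∈ A, (t₀ + i) % p = p - 1 := by
    intro i hi
    have h := (hC₀ i hi).mpr hi
    simp only [Set.mem_setOf_eq] at h
    by_contra hne
    unfold dilute at h
    rw [if_neg hne] at h
    exact absurd h.2 (by simp)
  have hres : ∀ i ∈ A, ∀ j ∈ A, i % p = j % p := by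
    intro i hi j hj
    have h : (t₀ + i) % p = (t₀ + j) % p := by rw [hmod i hi, hmod j hj]
    exact Nat.ModEq.add_left_cancel' t₀ h
  have hinj : Set.InjOn (· / p) (A : Set ℕ) := by
    intro i hi j hj h
    simp only at h
    have h2 := hres i hi j hj
    have h3 := Nat.div_add_mod i p
    rw [h, h2, Nat.div_add_mod] at h3
    exact h3.symm
  refine ⟨A.image (· / p), Finset.card_image_of_injOn hinj, ?_⟩
  intro B' hB'
  by_cases hB : (A.filter (fun i => i / p ∈ B')) = ∅
  · refine ⟨_, ⟨0, 0, rfl⟩, ?_⟩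
    intro q hq
    simp only [Set.mem_setOf_eq]
    obtain ⟨i, hiA, rfl⟩ := Finset.mem_image.mp hq
    constructor
    · rintro ⟨h, -⟩
      exact absurd h (Nat.not_lt_zero _)
    · intro hqB'
      exfalso
      have : i ∈ A.filter (fun i => i / p ∈ B') := Finset.mem_filter.mpr ⟨hiA, hqB'⟩
      rw [hB] at this
      exact absurd this (Finset.notMem_empty _)
  · obtain ⟨i₁, hi₁⟩ := Finset.nonempty_of_ne_empty hB
    rw [Finset.mem_filter] at hi₁
    obtain ⟨C, ⟨t, w, rfl⟩, hC⟩ :=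
      hA (A.filter (fun i => i / p ∈ B')) (Finset.filter_subset _ _)
    have hC₁ := (hC i₁ hi₁.1).mpr (Finset.mem_filter.mpr hi₁)
    simp only [Set.mem_setOf_eq] at hC₁
    have ht1 : (t + i₁) % p = p - 1 := by
      by_contra hne
      have := hC₁.2
      unfold dilute at this
      rw [if_neg hne] at this
      exact absurd this (by simp)
    have ht : (t + i₁ % p) % p = p - 1 := by
      have hmm : (t + i₁ % p) % p = (t + i₁) % p :=
        Nat.ModEq.add_left t (Nat.mod_modEq i₁ p)
      rw [hmm, ht1]
    set s := (t + i₁ % p) / p with hs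
    have hts : t + i₁ % p = p * s + (p - 1) := by
      have h := Nat.div_add_mod (t + i₁ % p) p
      rw [ht] at h
      exact h.symm
    have key : ∀ i ∈ A, t + i = p * (s + i / p) + (p - 1) := by
      intro i hi
      have h2 : i % p = i₁ % p := hres i hi i₁ hi₁.1
      have h3 := Nat.div_add_mod i p
      calc t + i = t + (p * (i / p) + i % p) := by rw [h3]
        _ = (t + i₁ % p) + p * (i / p) := by rw [h2]; ring
        _ = p * s + (p - 1) + p * (i / p) := by rw [hts]
        _ = p * (s + i / p) + (p - 1) := by ring
    refine ⟨_, ⟨s, if w ≤ i₁ % p then 0 else (w - i₁ % p + p - 1) / p, rfl⟩, ?_⟩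
    intro q hq
    obtain ⟨i, hiA, rfl⟩ := Finset.mem_image.mp hq
    have hCi := hC i hiA
    simp only [Set.mem_setOf_eq, Finset.mem_filter] at hCi ⊢
    rw [key i hiA, dilute_eval S hp0] at hCi
    have hiw : (i / p < if w ≤ i₁ % p then 0 else (w - i₁ % p + p - 1) / p) ↔ i < w := by
      rw [window_div hp0]
      have h2 : i % p = i₁ % p := hres i hiA i₁ hi₁.1
      have h3 := Nat.div_add_mod i p
      rw [h2] at h3
      rw [h3]
    rw [hiw, hCi]
    simp [hiA]

/-- For `p > 1`, `VCdim (S^{[p]}) = VCdim S`. -/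
theorem vcdim_dilute (S : ℕ → Bool) (p : ℕ) (hp : 1 < p) :
    VCdim (dilute S p) = VCdim S := by
  have hp0 : 0 < p := by omega
  have hinjf : Function.Injective (fun i => p * i + (p - 1)) := by
    intro a b h
    simp only at h
    have : p * a = p * b := by omega
    exact Nat.eq_of_mul_eq_mul_left hp0 this
  unfold VCdim vcDimF
  congr 1
  ext n
  simp only [Set.mem_setOf_eq]
  constructor
  · rintro ⟨A, hA, rfl⟩
    obtain ⟨A', hc, hA'⟩ := shatter_backward S hp hA
    exact ⟨A', hA', by rw [hc]⟩
  · rintro ⟨A, hA, rfl⟩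
    exact ⟨A.image (fun i => p * i + (p - 1)), shatter_forward S hp hA,
      by rw [Finset.card_image_of_injective _ hinjf]⟩
end
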